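/- arXiv:2205.15102 — 4 statements merged into one kernel-verified Lean document; each statement's English description precedes it below -/
import Mathlib

section
/- Suppose each row (X_{1,n},…,X_{k(n),n}) of the array is associated with X_{k,n} ~ Bernoulli(p_{k,n}), and, writing p̄_n = sup_{1≤k≤k(n)} p_{k,n} and X'_{h,j,n} = X_{(j−1)ℓ(n)+h,n}, assume: (2a) p̄_n → 0; (2b) Σ_{k=1}^{k(n)} p_{k,n} → λ for some λ > 0; (2c) k(n)·p̄_n² → 0; (2d) k(n)²·sup_{1≤r≠s≤k(n)} Cov(X_{r,n}, X_{s,n}) → 0; (3) Σ_{h=1}^{r(n)} p_{m(n)ℓ(n)+h,n} → 0; (4a) m(n)·sup_{1≤j≤m(n)} Σ_{1≤r≠s≤ℓ(n)} Cov(X'_{r,j,n}, X'_{s,j,n}) → 0; (4b) Σ_{1≤r≠s≤r(n)} Cov(X_{m(n)ℓ(n)+r,n}, X_{m(n)ℓ(n)+s,n}) → 0. Then S_n[X] converges in distribution to the Poisson(λ) law. (Theorem 4.3 / conv_Bern_Pois_Gen) -/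
open MeasureTheory ProbabilityTheory Filter Finset Topology

noncomputable section

/-- The covariance `Cov(X, Y) = E[XY] - E[X]E[Y]` of two real random variables. -/
def rcov {Ω : Type*} [MeasurableSpace Ω] (P : Measure Ω) (X Y : Ω → ℝ) : ℝ :=
  ∫ ω, X ω * Y ω ∂P - (∫ ω, X ω ∂P) * (∫ ω, Y ω ∂P)

/-- A finite family `(X 0, ..., X (m-1))` of real random variables is *associated*:
for every pair of bounded, measurable, coordinatewise nondecreasing functions
`f, g : ℝ^m → ℝ`, `Cov(f(X), g(X)) ≥ 0`. -/
def AssociatedRVs {Ω : Type*} [MeasurableSpace Ω] (P : Measure Ω) {m : ℕ}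
    (X : Fin m → Ω → ℝ) : Prop :=
  ∀ f g : (Fin m → ℝ) → ℝ, Measurable f → Measurable g →
    (∃ C, ∀ x, |f x| ≤ C) → (∃ C, ∀ x, |g x| ≤ C) →
    Monotone f → Monotone g →
    0 ≤ rcov P (fun ω => f (fun i => X i ω)) (fun ω => g (fun i => X i ω))

/-- Convergence in distribution of a sequence of real random variables to a law `μ` on `ℝ`:
integrals of every bounded continuous function converge. -/
def TendstoInDistribution {Ω : Type*} [MeasurableSpace Ω] (P : Measure Ω)
    (X : ℕ → Ω → ℝ) (μ : Measure ℝ) : Prop :=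
  ∀ f : BoundedContinuousFunction ℝ ℝ,
    Tendsto (fun n => ∫ ω, f (X n ω) ∂P) atTop (𝓝 (∫ x, f x ∂μ))

/-- The Poisson law with mean `l`, as a measure on `ℝ`: `P({j}) = e^(-l) l^j / j!`. -/
def poissonLaw (l : ℝ) : Measure ℝ :=
  Measure.sum fun j : ℕ =>
    ENNReal.ofReal (Real.exp (-l) * l ^ j / (Nat.factorial j)) • Measure.dirac (j : ℝ)

/-- The Binomial(n, p) law, as a measure on `ℝ`: `P({j}) = C(n,j) p^j (1-p)^(n-j)`. -/
def binomialLaw (n : ℕ) (p : ℝ) : Measure ℝ :=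
  Measure.sum fun j : ℕ =>
    ENNReal.ofReal ((n.choose j) * p ^ j * (1 - p) ^ (n - j)) • Measure.dirac (j : ℝ)

/-- The Bernoulli(p) law, as a measure on `ℝ`: `P({1}) = p`, `P({0}) = 1 - p`. -/
def bernoulliLaw (p : ℝ) : Measure ℝ :=
  ENNReal.ofReal (1 - p) • Measure.dirac (0 : ℝ) + ENNReal.ofReal p • Measure.dirac (1 : ℝ)

/-- The negative binomial law `NB(k, p)`, the law of a sum of `k` i.i.d. Geometric(p)
variables (on `{1, 2, ...}`): `P({j}) = C(j-1, k-1) p^k (1-p)^(j-k)` for `j ≥ k`. -/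
def negBinomialLaw (k : ℕ) (p : ℝ) : Measure ℝ :=
  Measure.sum fun j : ℕ =>
    ENNReal.ofReal (if k ≤ j then ((j - 1).choose (k - 1)) * p ^ k * (1 - p) ^ (j - k) else 0)
      • Measure.dirac (j : ℝ)

/-- The corrected geometric law of parameter `p` (the law of `Z - 1` where `Z` is
Geometric(p) on `{1, 2, ...}`): `P({j}) = p (1-p)^j` for `j ∈ ℕ`. -/
def correctedGeomLaw (p : ℝ) : Measure ℝ :=
  Measure.sum fun j : ℕ => ENNReal.ofReal (p * (1 - p) ^ j) • Measure.dirac (j : ℝ)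

/-- A row `(X 0, ..., X (K-1))` is (strictly) stationary: for every `t ≥ 1` and `s`
with `s + t ≤ K`, `(X t, ..., X (s+t-1))` has the same joint law as `(X 0, ..., X (s-1))`. -/
def RowStationary {Ω : Type*} [MeasurableSpace Ω] (P : Measure Ω) (K : ℕ)
    (X : ℕ → Ω → ℝ) : Prop :=
  ∀ s t : ℕ, 1 ≤ t → s + t ≤ K →
    Measure.map (fun ω (i : Fin s) => X (t + i) ω) P
      = Measure.map (fun ω (i : Fin s) => X (i : ℕ) ω) P

/-- Characteristic function `φ_X(u) = E[exp(iuX)]` of a real random variable. -/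
def charRV {Ω : Type*} [MeasurableSpace Ω] (P : Measure Ω) (X : Ω → ℝ) (u : ℝ) : ℂ :=
  ∫ ω, Complex.exp (Complex.I * u * X ω) ∂P

namespace PoisAux

/-- clamp to [0,1] -/
def cl (t : ℝ) : ℝ := max 0 (min t 1)

lemma cl_mono : Monotone cl := fun a b h => max_le_max le_rfl (min_le_min h le_rfl)
lemma cl_meas : Measurable cl := measurable_const.max (measurable_id.min measurable_const)
lemma cl_nonneg (t : ℝ) : 0 ≤ cl t := le_max_left _ _
lemma cl_le_one (t : ℝ) : cl t ≤ 1 := max_le zero_le_one (min_le_right _ _)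
lemma cl_abs_le (t : ℝ) : |cl t| ≤ 1 := abs_le.2 ⟨by linarith [cl_nonneg t], cl_le_one t⟩
lemma cl_zero : cl 0 = 0 := by simp [cl]
lemma cl_one : cl 1 = 1 := by norm_num [cl]
lemma cl_of_mem {t : ℝ} (h : t ∈ ({0,1} : Set ℝ)) : cl t = t := by
  simp only [Set.mem_insert_iff, Set.mem_singleton_iff] at h
  rcases h with rfl | rfl <;> norm_num [cl]

variable {Ω : Type*} [MeasurableSpace Ω] (P : Measure Ω) [IsProbabilityMeasure P]

lemma integrable_of_bdd {f : Ω → ℝ} (hf : Measurable f) {C : ℝ} (h : ∀ ω, |f ω| ≤ C) :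
    Integrable f P :=
  (integrable_const C).mono' hf.aestronglyMeasurable (Filter.Eventually.of_forall h)

lemma rcov_comm (X Y : Ω → ℝ) : rcov P X Y = rcov P Y X := by
  simp only [rcov, mul_comm]

lemma rcov_congr_ae {X X' Y Y' : Ω → ℝ} (hX : X =ᵐ[P] X') (hY : Y =ᵐ[P] Y') :
    rcov P X Y = rcov P X' Y' := by
  unfold rcov
  rw [integral_congr_ae hX, integral_congr_ae hY,
    integral_congr_ae (hX.mp (hY.mono fun ω h1 h2 => by rw [h1, h2]))]

lemma rcov_const_mul (a : ℝ) (X Y : Ω → ℝ) :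
    rcov P (fun ω => a * X ω) Y = a * rcov P X Y := by
  unfold rcov
  rw [show (fun ω => (fun ω => a * X ω) ω * Y ω) = fun ω => a * (X ω * Y ω) by ext ω; ring,
    integral_const_mul, integral_const_mul]
  ring

lemma rcov_const_mul_right (a : ℝ) (X Y : Ω → ℝ) :
    rcov P X (fun ω => a * Y ω) = a * rcov P X Y := by
  rw [rcov_comm, rcov_const_mul, rcov_comm]

/-- rcov (b - X) (c - Y) = rcov X Y , for bounded measurable X Y. -/
lemma rcov_const_sub (b c : ℝ) {X Y : Ω → ℝ} (hX : Measurable X) (hY : Measurable Y)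
    {CX CY : ℝ} (hbX : ∀ ω, |X ω| ≤ CX) (hbY : ∀ ω, |Y ω| ≤ CY) :
    rcov P (fun ω => b - X ω) (fun ω => c - Y ω) = rcov P X Y := by
  have iX : Integrable X P := integrable_of_bdd P hX hbX
  have iY : Integrable Y P := integrable_of_bdd P hY hbY
  have iXY : Integrable (fun ω => X ω * Y ω) P := by
    refine integrable_of_bdd P (hX.mul hY) (C := CX * CY) fun ω => ?_
    rw [abs_mul]
    exact mul_le_mul (hbX ω) (hbY ω) (abs_nonneg _) ((abs_nonneg _).trans (hbX ω))
  have i0 : Integrable (fun ω => c * X ω) P := iX.const_mul c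
  have i0' : Integrable (fun ω => b * Y ω) P := iY.const_mul b
  have i1 : Integrable (fun ω => c * X ω - X ω * Y ω) P := i0.sub iXY
  have i2 : Integrable (fun ω => b * Y ω + (c * X ω - X ω * Y ω)) P := i0'.add i1
  have hA : ∫ ω, (b * Y ω + (c * X ω - X ω * Y ω)) ∂P
      = b * (∫ ω, Y ω ∂P) + (c * (∫ ω, X ω ∂P) - ∫ ω, X ω * Y ω ∂P) := by
    rw [integral_add i0' i1, integral_sub i0 iXY, integral_const_mul, integral_const_mul]
  have e : (fun ω => (b - X ω) * (c - Y ω)) =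
      fun ω => b * c - (b * Y ω + (c * X ω - X ω * Y ω)) := by ext ω; ring
  have h3 : ∫ ω, (b - X ω) * (c - Y ω) ∂P
      = b * c - (b * (∫ ω, Y ω ∂P) + (c * (∫ ω, X ω ∂P) - ∫ ω, X ω * Y ω ∂P)) := by
    rw [e, integral_sub (integrable_const _) i2, hA, integral_const]
    simp [measure_univ]
  have h1 : ∫ ω, (b - X ω) ∂P = b - ∫ ω, X ω ∂P := by
    rw [integral_sub (integrable_const _) iX, integral_const]; simp [measure_univ]
  have h2 : ∫ ω, (c - Y ω) ∂P = c - ∫ ω, Y ω ∂P := by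
    rw [integral_sub (integrable_const _) iY, integral_const]; simp [measure_univ]
  unfold rcov
  rw [h3, h1, h2]
  ring

/-- additivity in the left argument over a Finset sum, assuming boundedness. -/
lemma rcov_sum_left {ι : Type*} (s : Finset ι) (U : ι → Ω → ℝ) (V : Ω → ℝ)
    (hU : ∀ i, Measurable (U i)) (hV : Measurable V)
    (CU : ι → ℝ) (hbU : ∀ i ω, |U i ω| ≤ CU i) {CV : ℝ} (hbV : ∀ ω, |V ω| ≤ CV) :
    rcov P (fun ω => ∑ i ∈ s, U i ω) V = ∑ i ∈ s, rcov P (U i) V := by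
  classical
  have iUV : ∀ i, Integrable (fun ω => U i ω * V ω) P := fun i => by
    refine integrable_of_bdd P ((hU i).mul hV) (C := CU i * CV) fun ω => ?_
    rw [abs_mul]
    exact mul_le_mul (hbU i ω) (hbV ω) (abs_nonneg _) ((abs_nonneg _).trans (hbU i ω))
  have iU : ∀ i, Integrable (U i) P := fun i => integrable_of_bdd P (hU i) (hbU i)
  have e1 : ∫ ω, (∑ i ∈ s, U i ω) * V ω ∂P = ∑ i ∈ s, ∫ ω, U i ω * V ω ∂P := by
    rw [show (fun ω => (∑ i ∈ s, U i ω) * V ω) = fun ω => ∑ i ∈ s, U i ω * V ω by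
      ext ω; rw [Finset.sum_mul]]
    exact integral_finset_sum s fun i _ => iUV i
  have e2 : ∫ ω, (∑ i ∈ s, U i ω) ∂P = ∑ i ∈ s, ∫ ω, U i ω ∂P :=
    integral_finset_sum s fun i _ => iU i
  unfold rcov
  rw [e1, e2, Finset.sum_mul, ← Finset.sum_sub_distrib]


section Bern
variable {Ω : Type*} [MeasurableSpace Ω] (P : Measure Ω) [IsProbabilityMeasure P]

lemma bernoulli_p_mem {p : ℝ} (h : IsProbabilityMeasure (bernoulliLaw p)) :
    p ∈ Set.Icc (0:ℝ) 1 := by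
  have hu := h.measure_univ
  unfold bernoulliLaw at hu
  simp only [Measure.add_apply, Measure.smul_apply, measure_univ, smul_eq_mul,
    mul_one] at hu
  constructor
  · by_contra hneg
    push_neg at hneg
    rw [ENNReal.ofReal_eq_zero.2 hneg.le] at hu
    rw [add_zero, ENNReal.ofReal_eq_one] at hu
    linarith
  · by_contra hgt
    push_neg at hgt
    rw [ENNReal.ofReal_eq_zero.2 (by linarith : (1:ℝ) - p ≤ 0)] at hu
    rw [zero_add, ENNReal.ofReal_eq_one] at hu
    linarith

lemma integrable_bernoulli {f : ℝ → ℝ} (hf : Measurable f) {C : ℝ} (hb : ∀ x, |f x| ≤ C)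
    (p : ℝ) : Integrable f (bernoulliLaw p) := by
  unfold bernoulliLaw
  rw [integrable_add_measure]
  constructor <;>
  · refine Integrable.smul_measure ?_ ENNReal.ofReal_ne_top
    exact integrable_of_bdd _ hf hb

lemma integral_bernoulliLaw {p : ℝ} (hp : p ∈ Set.Icc (0:ℝ) 1) {f : ℝ → ℝ}
    (hf : Measurable f) {C : ℝ} (hb : ∀ x, |f x| ≤ C) :
    ∫ x, f x ∂(bernoulliLaw p) = (1 - p) * f 0 + p * f 1 := by
  unfold bernoulliLaw
  rw [integral_add_measure
      (Integrable.smul_measure (integrable_of_bdd _ hf hb) ENNReal.ofReal_ne_top)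
      (Integrable.smul_measure (integrable_of_bdd _ hf hb) ENNReal.ofReal_ne_top),
    integral_smul_measure, integral_smul_measure, integral_dirac, integral_dirac,
    ENNReal.toReal_ofReal (by linarith [hp.2]), ENNReal.toReal_ofReal hp.1]
  simp [smul_eq_mul]

variable {Y : Ω → ℝ} {q : ℝ} (hY : Measurable Y) (hlaw : Measure.map Y P = bernoulliLaw q)

include hY hlaw

lemma law_q_mem : q ∈ Set.Icc (0:ℝ) 1 := by
  refine bernoulli_p_mem ?_
  rw [← hlaw]
  exact Measure.isProbabilityMeasure_map hY.aemeasurable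

lemma ae_mem_01 : ∀ᵐ ω ∂P, Y ω ∈ ({0,1} : Set ℝ) := by
  have hms : MeasurableSet ({0,1} : Set ℝ)ᶜ :=
    (MeasurableSet.insert (measurableSet_singleton 1) 0).compl
  have : P (Y ⁻¹' ({0,1} : Set ℝ)ᶜ) = 0 := by
    rw [← Measure.map_apply hY hms, hlaw]
    unfold bernoulliLaw
    rw [Measure.add_apply, Measure.smul_apply, Measure.smul_apply,
      Measure.dirac_apply' _ hms, Measure.dirac_apply' _ hms]
    simp
  exact this

lemma integral_comp_bern {f : ℝ → ℝ} (hf : Measurable f) {C : ℝ} (hb : ∀ x, |f x| ≤ C) :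
    ∫ ω, f (Y ω) ∂P = (1 - q) * f 0 + q * f 1 := by
  rw [← integral_map hY.aemeasurable hf.aestronglyMeasurable, hlaw,
    integral_bernoulliLaw (law_q_mem P hY hlaw) hf hb]

lemma integral_cl_eq : ∫ ω, cl (Y ω) ∂P = q := by
  rw [integral_comp_bern P hY hlaw cl_meas cl_abs_le, cl_zero, cl_one]
  ring

end Bern

section MoreRcov
variable {Ω : Type*} [MeasurableSpace Ω] (P : Measure Ω) [IsProbabilityMeasure P]

lemma rcov_add_left {U V W : Ω → ℝ} (hU : Measurable U) (hV : Measurable V)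
    (hW : Measurable W) {CU CV CW : ℝ} (hbU : ∀ ω, |U ω| ≤ CU) (hbV : ∀ ω, |V ω| ≤ CV)
    (hbW : ∀ ω, |W ω| ≤ CW) :
    rcov P (fun ω => U ω + V ω) W = rcov P U W + rcov P V W := by
  have iUW : Integrable (fun ω => U ω * W ω) P := by
    refine integrable_of_bdd P (hU.mul hW) (C := CU * CW) fun ω => ?_
    rw [abs_mul]
    exact mul_le_mul (hbU ω) (hbW ω) (abs_nonneg _) ((abs_nonneg _).trans (hbU ω))
  have iVW : Integrable (fun ω => V ω * W ω) P := by
    refine integrable_of_bdd P (hV.mul hW) (C := CV * CW) fun ω => ?_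
    rw [abs_mul]
    exact mul_le_mul (hbV ω) (hbW ω) (abs_nonneg _) ((abs_nonneg _).trans (hbV ω))
  have iU : Integrable U P := integrable_of_bdd P hU hbU
  have iV : Integrable V P := integrable_of_bdd P hV hbV
  have e1 : ∫ ω, (U ω + V ω) * W ω ∂P = (∫ ω, U ω * W ω ∂P) + ∫ ω, V ω * W ω ∂P := by
    rw [show (fun ω => (U ω + V ω) * W ω) = fun ω => U ω * W ω + V ω * W ω by ext ω; ring,
      integral_add iUW iVW]
  unfold rcov
  rw [e1, integral_add iU iV]
  ring

lemma rcov_const_sub_right (c : ℝ) {X V : Ω → ℝ} (hX : Measurable X) (hV : Measurable V)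
    {CX CV : ℝ} (hbX : ∀ ω, |X ω| ≤ CX) (hbV : ∀ ω, |V ω| ≤ CV) :
    rcov P X (fun ω => c - V ω) = - rcov P X V := by
  have h := rcov_const_sub P 0 c (X := fun ω => -X ω) (hX.neg : Measurable fun ω => -X ω) hV
    (CX := CX) (fun ω => by rw [abs_neg]; exact hbX ω) hbV
  have e : rcov P (fun ω => 0 - - X ω) (fun ω => c - V ω) = rcov P X (fun ω => c - V ω) := by
    apply rcov_congr_ae
    · exact Filter.Eventually.of_forall fun ω => by ring
    · exact Filter.Eventually.of_forall fun ω => rfl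
  rw [e] at h
  rw [h]
  unfold rcov
  have : (fun ω => -X ω * V ω) = fun ω => -(X ω * V ω) := by ext ω; ring
  rw [this, integral_neg, integral_neg]
  ring

end MoreRcov

section ProdLemmas
variable {ι : Type*}

lemma prod_sub_prod_le (s : Finset ι) (a b : ι → ℝ) (h0 : ∀ i ∈ s, 0 ≤ b i)
    (hba : ∀ i ∈ s, b i ≤ a i) (h1 : ∀ i ∈ s, a i ≤ 1) :
    ∏ i ∈ s, a i - ∏ i ∈ s, b i ≤ ∑ i ∈ s, (a i - b i) := by
  classical
  induction s using Finset.induction_on with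
  | empty => simp
  | @insert k s hk ih =>
    have h0' : ∀ i ∈ s, 0 ≤ b i := fun i hi => h0 i (Finset.mem_insert_of_mem hi)
    have hba' : ∀ i ∈ s, b i ≤ a i := fun i hi => hba i (Finset.mem_insert_of_mem hi)
    have h1' : ∀ i ∈ s, a i ≤ 1 := fun i hi => h1 i (Finset.mem_insert_of_mem hi)
    have hmem := Finset.mem_insert_self k s
    have hbk : 0 ≤ b k := h0 k hmem
    have hak1 : a k ≤ 1 := h1 k hmem
    have hbak : b k ≤ a k := hba k hmem
    have hPb0 : 0 ≤ ∏ i ∈ s, b i := Finset.prod_nonneg h0'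
    have hPb1 : ∏ i ∈ s, b i ≤ 1 :=
      Finset.prod_le_one h0' fun i hi => (hba' i hi).trans (h1' i hi)
    have hPP : ∏ i ∈ s, b i ≤ ∏ i ∈ s, a i := Finset.prod_le_prod h0' hba'
    have ihh := ih h0' hba' h1'
    rw [Finset.prod_insert hk, Finset.prod_insert hk, Finset.sum_insert hk]
    nlinarith [Finset.prod_nonneg h0']

lemma abs_prod_sub_prod (s : Finset ι) (a b : ι → ℝ)
    (ha : ∀ i ∈ s, a i ∈ Set.Icc (0:ℝ) 1) (hb : ∀ i ∈ s, b i ∈ Set.Icc (0:ℝ) 1) :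
    |∏ i ∈ s, a i - ∏ i ∈ s, b i| ≤ ∑ i ∈ s, |a i - b i| := by
  classical
  induction s using Finset.induction_on with
  | empty => simp
  | @insert k s hk ih =>
    have ha' : ∀ i ∈ s, a i ∈ Set.Icc (0:ℝ) 1 := fun i hi => ha i (Finset.mem_insert_of_mem hi)
    have hb' : ∀ i ∈ s, b i ∈ Set.Icc (0:ℝ) 1 := fun i hi => hb i (Finset.mem_insert_of_mem hi)
    have hmem := Finset.mem_insert_self k s
    have hPb0 : 0 ≤ ∏ i ∈ s, b i := Finset.prod_nonneg fun i hi => (hb' i hi).1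
    have hPb1 : ∏ i ∈ s, b i ≤ 1 := Finset.prod_le_one (fun i hi => (hb' i hi).1)
      (fun i hi => (hb' i hi).2)
    have ihh := ih ha' hb'
    rw [Finset.prod_insert hk, Finset.prod_insert hk, Finset.sum_insert hk]
    have e : a k * ∏ i ∈ s, a i - b k * ∏ i ∈ s, b i
        = a k * (∏ i ∈ s, a i - ∏ i ∈ s, b i) + (a k - b k) * ∏ i ∈ s, b i := by ring
    rw [e]
    refine (abs_add_le _ _).trans ?_
    rw [abs_mul, abs_mul]
    have h1 : |a k| ≤ 1 := abs_le.2 ⟨by linarith [(ha k hmem).1], (ha k hmem).2⟩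
    have h2 : |∏ i ∈ s, b i| ≤ 1 := abs_le.2 ⟨by linarith, hPb1⟩
    have := mul_le_mul h1 ihh (abs_nonneg _) zero_le_one
    have := mul_le_mul_of_nonneg_left h2 (abs_nonneg (a k - b k))
    nlinarith [abs_nonneg (a k - b k)]

end ProdLemmas

section Key
variable {Ω : Type*} [MeasurableSpace Ω] (P : Measure Ω) [IsProbabilityMeasure P]
variable {K : ℕ} (Y : Fin K → Ω → ℝ) {z : ℝ}

lemma fac_mem (hz : z ∈ Set.Icc (0:ℝ) 1) (t : ℝ) :
    1 - (1 - z) * cl t ∈ Set.Icc (0:ℝ) 1 := by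
  have h1 := cl_nonneg t
  have h2 := cl_le_one t
  have hz1 := hz.1
  have hz2 := hz.2
  constructor <;> nlinarith

lemma prod_fac_mem (hz : z ∈ Set.Icc (0:ℝ) 1) (s : Finset (Fin K)) (x : Fin K → ℝ) :
    ∏ i ∈ s, (1 - (1 - z) * cl (x i)) ∈ Set.Icc (0:ℝ) 1 :=
  ⟨Finset.prod_nonneg fun i _ => (fac_mem hz (x i)).1,
    Finset.prod_le_one (fun i _ => (fac_mem hz (x i)).1) fun i _ => (fac_mem hz (x i)).2⟩

variable (hYm : ∀ i, Measurable (Y i)) (hA : AssociatedRVs P Y)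

include hYm

lemma fac_meas (i : Fin K) : Measurable (fun ω => 1 - (1 - z) * cl (Y i ω)) :=
  measurable_const.sub (measurable_const.mul (cl_meas.comp (hYm i)))

lemma prod_fac_meas (s : Finset (Fin K)) :
    Measurable (fun ω => ∏ i ∈ s, (1 - (1 - z) * cl (Y i ω))) :=
  Finset.measurable_prod s fun i _ => fac_meas Y hYm i

include hA

lemma rcov_cl_nonneg (r t : Fin K) :
    0 ≤ rcov P (fun ω => cl (Y r ω)) (fun ω => cl (Y t ω)) := by
  have h := hA (fun x => cl (x r)) (fun x => cl (x t))
    (cl_meas.comp (measurable_pi_apply r)) (cl_meas.comp (measurable_pi_apply t))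
    ⟨1, fun x => cl_abs_le _⟩ ⟨1, fun x => cl_abs_le _⟩
    (fun x y hxy => cl_mono (hxy r)) (fun x y hxy => cl_mono (hxy t))
  exact h

lemma rcovA (hz : z ∈ Set.Icc (0:ℝ) 1) (s : Finset (Fin K)) (k : Fin K) :
    0 ≤ rcov P (fun ω => ∏ i ∈ s, (1 - (1 - z) * cl (Y i ω)))
      (fun ω => 1 - (1 - z) * cl (Y k ω)) := by
  have hz' : (0:ℝ) ≤ 1 - z := by linarith [hz.2]
  have hf : Measurable (fun x : Fin K → ℝ => 1 - ∏ i ∈ s, (1 - (1 - z) * cl (x i))) :=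
    measurable_const.sub (Finset.measurable_prod s fun i _ =>
      measurable_const.sub (measurable_const.mul (cl_meas.comp (measurable_pi_apply i))))
  have hg : Measurable (fun x : Fin K → ℝ => (1 - z) * cl (x k)) :=
    measurable_const.mul (cl_meas.comp (measurable_pi_apply k))
  have hmf : Monotone (fun x : Fin K → ℝ => 1 - ∏ i ∈ s, (1 - (1 - z) * cl (x i))) := by
    intro x y hxy
    refine sub_le_sub_left ?_ 1
    refine Finset.prod_le_prod (fun i _ => (fac_mem hz (y i)).1) fun i _ => ?_
    exact sub_le_sub_left (mul_le_mul_of_nonneg_left (cl_mono (hxy i)) hz') 1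
  have hmg : Monotone (fun x : Fin K → ℝ => (1 - z) * cl (x k)) := fun x y hxy =>
    mul_le_mul_of_nonneg_left (cl_mono (hxy k)) hz'
  have hbf : ∃ C, ∀ x : Fin K → ℝ, |1 - ∏ i ∈ s, (1 - (1 - z) * cl (x i))| ≤ C := by
    refine ⟨1, fun x => abs_le.2 ⟨?_, ?_⟩⟩
    · linarith [(prod_fac_mem hz s x).2]
    · linarith [(prod_fac_mem hz s x).1]
  have hbg : ∃ C, ∀ x : Fin K → ℝ, |(1 - z) * cl (x k)| ≤ C := by
    refine ⟨1, fun x => abs_le.2 ⟨?_, ?_⟩⟩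
    · nlinarith [cl_nonneg (x k), cl_le_one (x k), hz.1, hz.2]
    · nlinarith [cl_nonneg (x k), cl_le_one (x k), hz.1, hz.2]
  have h0 := hA (fun x => 1 - ∏ i ∈ s, (1 - (1 - z) * cl (x i)))
    (fun x => (1 - z) * cl (x k)) hf hg hbf hbg hmf hmg
  have h0' : 0 ≤ rcov P (fun ω => 1 - ∏ i ∈ s, (1 - (1 - z) * cl (Y i ω)))
      (fun ω => (1 - z) * cl (Y k ω)) := h0
  have hU : Measurable (fun ω => 1 - ∏ i ∈ s, (1 - (1 - z) * cl (Y i ω))) :=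
    measurable_const.sub (prod_fac_meas Y hYm s)
  have hV : Measurable (fun ω => (1 - z) * cl (Y k ω)) :=
    measurable_const.mul (cl_meas.comp (hYm k))
  have hbU : ∀ ω, |1 - ∏ i ∈ s, (1 - (1 - z) * cl (Y i ω))| ≤ 1 := fun ω => by
    have := prod_fac_mem hz s (fun i => Y i ω)
    exact abs_le.2 ⟨by linarith [this.2], by linarith [this.1]⟩
  have hbV : ∀ ω, |(1 - z) * cl (Y k ω)| ≤ 1 := fun ω => by
    have h1 := cl_nonneg (Y k ω); have h2 := cl_le_one (Y k ω)
    exact abs_le.2 ⟨by nlinarith [hz.1, hz.2], by nlinarith [hz.1, hz.2]⟩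
  have e := rcov_const_sub P 1 1 hU hV hbU hbV
  have e2 : rcov P (fun ω => 1 - (1 - ∏ i ∈ s, (1 - (1 - z) * cl (Y i ω))))
      (fun ω => 1 - (1 - z) * cl (Y k ω))
      = rcov P (fun ω => ∏ i ∈ s, (1 - (1 - z) * cl (Y i ω)))
        (fun ω => 1 - (1 - z) * cl (Y k ω)) := by
    apply rcov_congr_ae
    · exact Filter.Eventually.of_forall fun ω => by ring
    · exact Filter.Eventually.of_forall fun ω => rfl
  rw [← e2, e]
  exact h0'

lemma rcovB (hz : z ∈ Set.Icc (0:ℝ) 1) (s : Finset (Fin K)) (k : Fin K) :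
    rcov P (fun ω => ∏ i ∈ s, (1 - (1 - z) * cl (Y i ω)))
      (fun ω => 1 - (1 - z) * cl (Y k ω))
    ≤ ∑ i ∈ s, rcov P (fun ω => cl (Y i ω)) (fun ω => cl (Y k ω)) := by
  have hz' : (0:ℝ) ≤ 1 - z := by linarith [hz.2]
  have hz'' : (1:ℝ) - z ≤ 1 := by linarith [hz.1]
  -- association applied to G = prod + (1-z) * sum cl, g = (1-z) cl(x k)
  have hf : Measurable (fun x : Fin K → ℝ =>
      (∏ i ∈ s, (1 - (1 - z) * cl (x i))) + (1 - z) * ∑ i ∈ s, cl (x i)) := by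
    refine Measurable.add ?_ (measurable_const.mul ?_)
    · exact Finset.measurable_prod s fun i _ =>
        measurable_const.sub (measurable_const.mul (cl_meas.comp (measurable_pi_apply i)))
    · exact Finset.measurable_sum s fun i _ => cl_meas.comp (measurable_pi_apply i)
  have hg : Measurable (fun x : Fin K → ℝ => (1 - z) * cl (x k)) :=
    measurable_const.mul (cl_meas.comp (measurable_pi_apply k))
  have hmf : Monotone (fun x : Fin K → ℝ =>
      (∏ i ∈ s, (1 - (1 - z) * cl (x i))) + (1 - z) * ∑ i ∈ s, cl (x i)) := by
    intro x y hxy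
    have key := prod_sub_prod_le s (fun i => 1 - (1 - z) * cl (x i))
      (fun i => 1 - (1 - z) * cl (y i))
      (fun i _ => (fac_mem hz (y i)).1)
      (fun i _ => sub_le_sub_left (mul_le_mul_of_nonneg_left (cl_mono (hxy i)) hz') 1)
      (fun i _ => (fac_mem hz (x i)).2)
    have e : ∑ i ∈ s, ((1 - (1 - z) * cl (x i)) - (1 - (1 - z) * cl (y i)))
        = (1 - z) * ∑ i ∈ s, cl (y i) - (1 - z) * ∑ i ∈ s, cl (x i) := by
      rw [Finset.mul_sum, Finset.mul_sum, ← Finset.sum_sub_distrib]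
      exact Finset.sum_congr rfl fun i _ => by ring
    rw [e] at key
    simp only
    linarith
  have hbf : ∃ C, ∀ x : Fin K → ℝ,
      |(∏ i ∈ s, (1 - (1 - z) * cl (x i))) + (1 - z) * ∑ i ∈ s, cl (x i)| ≤ C := by
    refine ⟨1 + s.card, fun x => ?_⟩
    have h1 := prod_fac_mem hz s x
    have h2 : (0:ℝ) ≤ ∑ i ∈ s, cl (x i) := Finset.sum_nonneg fun i _ => cl_nonneg _
    have h3 : ∑ i ∈ s, cl (x i) ≤ s.card := by
      have := Finset.sum_le_card_nsmul s (fun i => cl (x i)) (1:ℝ) fun i _ => cl_le_one _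
      simpa using this
    refine abs_le.2 ⟨by nlinarith [h1.1, h2, hz', (by positivity : (0:ℝ) ≤ (s.card:ℝ))],
      by nlinarith [h1.2, h3, h2, hz', hz'']⟩
  have hbg : ∃ C, ∀ x : Fin K → ℝ, |(1 - z) * cl (x k)| ≤ C := by
    refine ⟨1, fun x => abs_le.2 ⟨?_, ?_⟩⟩ <;>
      nlinarith [cl_nonneg (x k), cl_le_one (x k), hz.1, hz.2]
  have hmg : Monotone (fun x : Fin K → ℝ => (1 - z) * cl (x k)) := fun x y hxy =>
    mul_le_mul_of_nonneg_left (cl_mono (hxy k)) hz'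
  have h0 := hA _ _ hf hg hbf hbg hmf hmg
  have h0' : 0 ≤ rcov P (fun ω =>
      (∏ i ∈ s, (1 - (1 - z) * cl (Y i ω))) + (1 - z) * ∑ i ∈ s, cl (Y i ω))
      (fun ω => (1 - z) * cl (Y k ω)) := h0
  -- split
  have hPm : Measurable (fun ω => ∏ i ∈ s, (1 - (1 - z) * cl (Y i ω))) :=
    prod_fac_meas Y hYm s
  have hSm : Measurable (fun ω => (1 - z) * ∑ i ∈ s, cl (Y i ω)) :=
    measurable_const.mul (Finset.measurable_sum s fun i _ => cl_meas.comp (hYm i))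
  have hVm : Measurable (fun ω => (1 - z) * cl (Y k ω)) :=
    measurable_const.mul (cl_meas.comp (hYm k))
  have hbP : ∀ ω, |∏ i ∈ s, (1 - (1 - z) * cl (Y i ω))| ≤ 1 := fun ω => by
    have := prod_fac_mem hz s (fun i => Y i ω)
    exact abs_le.2 ⟨by linarith [this.1], this.2⟩
  have hbS : ∀ ω, |(1 - z) * ∑ i ∈ s, cl (Y i ω)| ≤ s.card := fun ω => by
    have h2 : (0:ℝ) ≤ ∑ i ∈ s, cl (Y i ω) := Finset.sum_nonneg fun i _ => cl_nonneg _
    have h3 : ∑ i ∈ s, cl (Y i ω) ≤ s.card := by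
      have := Finset.sum_le_card_nsmul s (fun i => cl (Y i ω)) (1:ℝ) fun i _ => cl_le_one _
      simpa using this
    refine abs_le.2 ⟨by nlinarith [(by positivity : (0:ℝ) ≤ (s.card:ℝ)), mul_nonneg hz' h2], by nlinarith [hz'', mul_nonneg hz' h2]⟩
  have hbV : ∀ ω, |(1 - z) * cl (Y k ω)| ≤ 1 := fun ω => by
    have h1 := cl_nonneg (Y k ω); have h2 := cl_le_one (Y k ω)
    exact abs_le.2 ⟨by nlinarith [hz.1, hz.2], by nlinarith [hz.1, hz.2]⟩
  rw [rcov_add_left P hPm hSm hVm hbP hbS hbV] at h0'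
  -- compute rcov of the sum part
  have e1 : rcov P (fun ω => (1 - z) * ∑ i ∈ s, cl (Y i ω)) (fun ω => (1 - z) * cl (Y k ω))
      = (1 - z) * rcov P (fun ω => ∑ i ∈ s, cl (Y i ω)) (fun ω => (1 - z) * cl (Y k ω)) :=
    rcov_const_mul P (1 - z) _ _
  have e2 : rcov P (fun ω => ∑ i ∈ s, cl (Y i ω)) (fun ω => (1 - z) * cl (Y k ω))
      = ∑ i ∈ s, rcov P (fun ω => cl (Y i ω)) (fun ω => (1 - z) * cl (Y k ω)) :=
    rcov_sum_left P s (fun i ω => cl (Y i ω)) _ (fun i => cl_meas.comp (hYm i)) hVm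
      (fun _ => 1) (fun i ω => cl_abs_le _) hbV
  have e3 : ∀ i, rcov P (fun ω => cl (Y i ω)) (fun ω => (1 - z) * cl (Y k ω))
      = (1 - z) * rcov P (fun ω => cl (Y i ω)) (fun ω => cl (Y k ω)) := fun i =>
    rcov_const_mul_right P (1 - z) _ _
  have hsum : rcov P (fun ω => (1 - z) * ∑ i ∈ s, cl (Y i ω)) (fun ω => (1 - z) * cl (Y k ω))
      = (1 - z) * ((1 - z) * ∑ i ∈ s, rcov P (fun ω => cl (Y i ω)) (fun ω => cl (Y k ω))) := by
    rw [e1, e2]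
    rw [Finset.sum_congr rfl fun i _ => e3 i, ← Finset.mul_sum]
  have hsub := rcov_const_sub_right P 1 hPm hVm hbP hbV
  have hS0 : (0:ℝ) ≤ ∑ i ∈ s, rcov P (fun ω => cl (Y i ω)) (fun ω => cl (Y k ω)) :=
    Finset.sum_nonneg fun i _ => rcov_cl_nonneg P Y hYm hA i k
  have hz2 : (1 - z) * (1 - z) ≤ 1 := by nlinarith [hz.1, hz.2]
  rw [hsub]
  rw [hsum] at h0'
  nlinarith [hS0, hz']


variable (q : Fin K → ℝ) (hlaw : ∀ i, Measure.map (Y i) P = bernoulliLaw (q i))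

include hlaw

omit hA in
lemma rcov_cl_eq (r t : Fin K) :
    rcov P (fun ω => cl (Y r ω)) (fun ω => cl (Y t ω)) = rcov P (Y r) (Y t) := by
  apply rcov_congr_ae
  · exact (ae_mem_01 P (hYm r) (hlaw r)).mono fun ω h => cl_of_mem h
  · exact (ae_mem_01 P (hYm t) (hlaw t)).mono fun ω h => cl_of_mem h

omit hA in
lemma integral_fac (i : Fin K) :
    ∫ ω, (1 - (1 - z) * cl (Y i ω)) ∂P = 1 - (1 - z) * q i := by
  have hb : ∀ x : ℝ, |1 - (1 - z) * cl x| ≤ 1 + |1 - z| := fun x => by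
    refine (abs_sub _ _).trans ?_
    simp only [abs_one]
    refine (add_le_add_iff_left 1).2 ?_
    rw [abs_mul]
    exact mul_le_of_le_one_right (abs_nonneg _) (by rw [abs_of_nonneg (cl_nonneg x)]; exact cl_le_one x)
  have hc : ∫ ω, (1 - (1 - z) * cl (Y i ω)) ∂P
      = (1 - q i) * (1 - (1 - z) * cl 0) + q i * (1 - (1 - z) * cl 1) :=
    integral_comp_bern P (hYm i) (hlaw i) (f := fun x => 1 - (1 - z) * cl x)
      (measurable_const.sub (measurable_const.mul cl_meas)) hb
  rw [hc, cl_zero, cl_one]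
  ring

lemma key_ind (hz : z ∈ Set.Icc (0:ℝ) 1) (s : Finset (Fin K)) :
    0 ≤ (∫ ω, ∏ i ∈ s, (1 - (1 - z) * cl (Y i ω)) ∂P) - ∏ i ∈ s, (1 - (1 - z) * q i) ∧
    (∫ ω, ∏ i ∈ s, (1 - (1 - z) * cl (Y i ω)) ∂P) - ∏ i ∈ s, (1 - (1 - z) * q i)
      ≤ ∑ r ∈ s, ∑ t ∈ s,
          (if r ≠ t then rcov P (fun ω => cl (Y r ω)) (fun ω => cl (Y t ω)) else 0) := by
  classical
  induction s using Finset.induction_on with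
  | empty => simp
  | @insert k s hk ih =>
    have hqk : q k ∈ Set.Icc (0:ℝ) 1 := law_q_mem P (hYm k) (hlaw k)
    have hEk : (1 - (1 - z) * q k) ∈ Set.Icc (0:ℝ) 1 := by
      constructor <;> nlinarith [hz.1, hz.2, hqk.1, hqk.2]
    have hprod : ∫ ω, ∏ i ∈ insert k s, (1 - (1 - z) * cl (Y i ω)) ∂P
        = rcov P (fun ω => ∏ i ∈ s, (1 - (1 - z) * cl (Y i ω)))
            (fun ω => 1 - (1 - z) * cl (Y k ω))
          + (∫ ω, ∏ i ∈ s, (1 - (1 - z) * cl (Y i ω)) ∂P) * (1 - (1 - z) * q k) := by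
      have e : (fun ω => ∏ i ∈ insert k s, (1 - (1 - z) * cl (Y i ω)))
          = fun ω => (∏ i ∈ s, (1 - (1 - z) * cl (Y i ω))) * (1 - (1 - z) * cl (Y k ω)) := by
        ext ω
        rw [Finset.prod_insert hk]
        ring
      rw [e]
      unfold rcov
      rw [integral_fac P Y hYm q hlaw k]
      ring
    have hA1 := rcovA P Y hYm hA hz s k
    have hA2 := rcovB P Y hYm hA hz s k
    have hSnn : (0:ℝ) ≤ ∑ i ∈ s, rcov P (fun ω => cl (Y i ω)) (fun ω => cl (Y k ω)) :=
      Finset.sum_nonneg fun i _ => rcov_cl_nonneg P Y hYm hA i k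
    have hBexp : ∑ r ∈ insert k s, ∑ t ∈ insert k s,
        (if r ≠ t then rcov P (fun ω => cl (Y r ω)) (fun ω => cl (Y t ω)) else 0)
        = (∑ t ∈ s, rcov P (fun ω => cl (Y k ω)) (fun ω => cl (Y t ω)))
          + (∑ r ∈ s, rcov P (fun ω => cl (Y r ω)) (fun ω => cl (Y k ω)))
          + ∑ r ∈ s, ∑ t ∈ s,
            (if r ≠ t then rcov P (fun ω => cl (Y r ω)) (fun ω => cl (Y t ω)) else 0) := by
      rw [Finset.sum_insert hk]
      rw [Finset.sum_insert hk]
      have e1 : ∑ t ∈ s, (if k ≠ t then rcov P (fun ω => cl (Y k ω)) (fun ω => cl (Y t ω)) else 0)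
          = ∑ t ∈ s, rcov P (fun ω => cl (Y k ω)) (fun ω => cl (Y t ω)) :=
        Finset.sum_congr rfl fun t ht => if_pos (by rintro rfl; exact hk ht)
      have e2 : ∀ r ∈ s, ∑ t ∈ insert k s,
          (if r ≠ t then rcov P (fun ω => cl (Y r ω)) (fun ω => cl (Y t ω)) else 0)
          = rcov P (fun ω => cl (Y r ω)) (fun ω => cl (Y k ω))
            + ∑ t ∈ s, (if r ≠ t then rcov P (fun ω => cl (Y r ω)) (fun ω => cl (Y t ω)) else 0) := by
        intro r hr
        rw [Finset.sum_insert hk, if_pos (show r ≠ k by rintro rfl; exact hk hr)]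
      rw [if_neg (by simp), Finset.sum_congr rfl e2, Finset.sum_add_distrib, e1]
      ring
    have hBnn1 : (0:ℝ) ≤ ∑ t ∈ s, rcov P (fun ω => cl (Y k ω)) (fun ω => cl (Y t ω)) :=
      Finset.sum_nonneg fun t _ => rcov_cl_nonneg P Y hYm hA k t
    rw [hprod, Finset.prod_insert hk, hBexp]
    have hcomm : ∑ t ∈ s, rcov P (fun ω => cl (Y k ω)) (fun ω => cl (Y t ω))
        = ∑ t ∈ s, rcov P (fun ω => cl (Y t ω)) (fun ω => cl (Y k ω)) :=
      Finset.sum_congr rfl fun t _ => rcov_comm P _ _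
    obtain ⟨ih1, ih2⟩ := ih
    constructor
    · nlinarith [hEk.1, hEk.2, ih1]
    · nlinarith [hEk.1, hEk.2, ih1, ih2, hSnn, hBnn1, hcomm.ge, hcomm.le]

theorem key_bound (hz : z ∈ Set.Icc (0:ℝ) 1) :
    |(∫ ω, ∏ i, (1 - (1 - z) * cl (Y i ω)) ∂P) - ∏ i, (1 - (1 - z) * q i)|
      ≤ ∑ r, ∑ t, (if r ≠ t then rcov P (Y r) (Y t) else 0) := by
  obtain ⟨h1, h2⟩ := key_ind P Y hYm hA q hlaw hz Finset.univ
  have e : ∑ r, ∑ t, (if r ≠ t then rcov P (Y r) (Y t) else 0)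
      = ∑ r, ∑ t, (if r ≠ t then rcov P (fun ω => cl (Y r ω)) (fun ω => cl (Y t ω)) else 0) := by
    refine Finset.sum_congr rfl fun r _ => Finset.sum_congr rfl fun t _ => ?_
    by_cases h : r ≠ t <;> simp [h, rcov_cl_eq P Y hYm q hlaw r t]
  rw [e]
  exact abs_le.2 ⟨by linarith, h2⟩

end Key

section Analytic

lemma exp_neg_le (t : ℝ) (ht : 0 ≤ t) : Real.exp (-t) ≤ 1 - t + t ^ 2 := by
  have h0 : (0:ℝ) < 1 + t := by linarith
  have h1 : 1 + t ≤ Real.exp t := by linarith [Real.add_one_le_exp t]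
  have h2 : (0:ℝ) < 1 - t + t ^ 2 := by nlinarith
  rw [Real.exp_neg, inv_le_comm₀ (Real.exp_pos t) h2]
  have h5 : (1 - t + t ^ 2)⁻¹ ≤ 1 + t := by
    rw [inv_eq_one_div, div_le_iff₀ h2]
    nlinarith
  linarith

lemma abs_lin_sub_exp (t : ℝ) (ht : t ∈ Set.Icc (0:ℝ) 1) :
    |(1 - t) - Real.exp (-t)| ≤ t ^ 2 := by
  have h1 : 1 - t ≤ Real.exp (-t) := by linarith [Real.add_one_le_exp (-t)]
  have h2 := exp_neg_le t ht.1
  rw [abs_sub_comm, abs_of_nonneg (by linarith)]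
  linarith

lemma prod_exp_bound {K : ℕ} (q : Fin K → ℝ) (hq : ∀ i, q i ∈ Set.Icc (0:ℝ) 1)
    {z : ℝ} (hz : z ∈ Set.Icc (0:ℝ) 1) :
    |(∏ i, (1 - (1 - z) * q i)) - Real.exp (-(1 - z) * ∑ i, q i)| ≤ ∑ i, q i ^ 2 := by
  have hz' : (0:ℝ) ≤ 1 - z := by linarith [hz.2]
  have hz'' : (1:ℝ) - z ≤ 1 := by linarith [hz.1]
  have hexp : Real.exp (-(1 - z) * ∑ i, q i) = ∏ i, Real.exp (-((1 - z) * q i)) := by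
    rw [← Real.exp_sum]
    congr 1
    rw [Finset.mul_sum]
    exact Finset.sum_congr rfl fun i _ => by ring
  rw [hexp]
  have key := PoisAux.abs_prod_sub_prod Finset.univ (fun i => 1 - (1 - z) * q i)
    (fun i => Real.exp (-((1 - z) * q i)))
    (fun i _ => by
      constructor <;> nlinarith [(hq i).1, (hq i).2])
    (fun i _ => by
      exact ⟨(Real.exp_pos _).le, Real.exp_le_one_iff.2 (by nlinarith [(hq i).1])⟩)
  refine key.trans (Finset.sum_le_sum fun i _ => ?_)
  have hti : (1 - z) * q i ∈ Set.Icc (0:ℝ) 1 := by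
    constructor <;> nlinarith [(hq i).1, (hq i).2]
  have h6 : (1 - z) ^ 2 ≤ 1 := by nlinarith
  have h7 : ((1 - z) * q i) ^ 2 = (1 - z) ^ 2 * q i ^ 2 := by ring
  calc |(1 - (1 - z) * q i) - Real.exp (-((1 - z) * q i))| ≤ ((1 - z) * q i) ^ 2 :=
        abs_lin_sub_exp _ hti
    _ ≤ q i ^ 2 := by nlinarith [sq_nonneg (q i)]

lemma biSup_mem_le {f : ℕ → ℝ} {K : ℕ} {C : ℝ} (hub : ∀ i < K, f i ≤ C) (hC : 0 ≤ C) :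
    (⨆ i ∈ Finset.range K, f i) ≤ C := by
  refine ciSup_le fun i => ?_
  by_cases hi : i ∈ Finset.range K
  · haveI : Nonempty (i ∈ Finset.range K : Prop) := ⟨hi⟩
    exact ciSup_le fun h => hub i (Finset.mem_range.1 hi)
  · haveI : IsEmpty (i ∈ Finset.range K : Prop) := isEmpty_Prop.2 hi
    rw [Real.iSup_of_isEmpty]
    exact hC

lemma le_biSup_mem {f : ℕ → ℝ} {K : ℕ} {C : ℝ} (hub : ∀ i < K, f i ≤ C) {k : ℕ}
    (hk : k < K) : f k ≤ ⨆ i ∈ Finset.range K, f i := by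
  have h1 : (⨆ _ : k ∈ Finset.range K, f k) = f k := ciSup_pos (Finset.mem_range.2 hk)
  rw [← h1]
  refine le_ciSup (f := fun i => ⨆ _ : i ∈ Finset.range K, f i) ⟨max C 0, ?_⟩ k
  rintro x ⟨i, rfl⟩
  simp only
  by_cases hi : i ∈ Finset.range K
  · rw [ciSup_pos hi]
    exact le_max_of_le_left (hub i (Finset.mem_range.1 hi))
  · haveI : IsEmpty (i ∈ Finset.range K : Prop) := isEmpty_Prop.2 hi
    rw [Real.iSup_of_isEmpty]
    exact le_max_right _ _

end Analytic

section Discrete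

/-- integral against a measure supported on a finite set -/
lemma integral_of_finite_support (μ : Measure ℝ) [IsProbabilityMeasure μ] (T : Finset ℝ)
    (hT : μ ((↑T : Set ℝ))ᶜ = 0) {f : ℝ → ℝ} (hf : Measurable f) {C : ℝ}
    (hb : ∀ x, |f x| ≤ C) :
    ∫ x, f x ∂μ = ∑ x ∈ T, f x * (μ {x}).toReal := by
  have hint : Integrable f μ := integrable_of_bdd μ hf hb
  have hTm : MeasurableSet (↑T : Set ℝ) := T.measurableSet
  have h1 : (∫ x in (↑T : Set ℝ), f x ∂μ) + ∫ x in (↑T : Set ℝ)ᶜ, f x ∂μ = ∫ x, f x ∂μ :=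
    integral_add_compl hTm hint
  have h2 : ∫ x in (↑T : Set ℝ)ᶜ, f x ∂μ = 0 := by
    rw [Measure.restrict_eq_zero.2 hT]
    exact integral_zero_measure f
  have h3 : ∫ x in (↑T : Set ℝ), f x ∂μ = ∑ x ∈ T, (μ {x}).toReal • f x :=
    setIntegral_finset T hint.integrableOn
  rw [← h1, h2, h3, add_zero]
  exact Finset.sum_congr rfl fun x _ => by rw [smul_eq_mul, mul_comm]

/-- the product over 0/1-valued x's equals a power of z, with exponent the sum -/
lemma prod_eq_pow_sum (s : Finset ℕ) (x : ℕ → ℝ) (hx : ∀ k ∈ s, x k ∈ ({0, 1} : Set ℝ)) :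
    ∃ m : ℕ, m ≤ s.card ∧ (∑ k ∈ s, x k = m) ∧
      ∀ z : ℝ, ∏ k ∈ s, (1 - (1 - z) * cl (x k)) = z ^ m := by
  classical
  induction s using Finset.induction_on with
  | empty => exact ⟨0, le_rfl, by simp, fun z => by simp⟩
  | @insert k s hk ih =>
    obtain ⟨m, hm, hsum, hprod⟩ := ih fun i hi => hx i (Finset.mem_insert_of_mem hi)
    have hxk := hx k (Finset.mem_insert_self k s)
    simp only [Set.mem_insert_iff, Set.mem_singleton_iff] at hxk
    rcases hxk with h0 | h1
    · refine ⟨m, ?_, ?_, fun z => ?_⟩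
      · rw [Finset.card_insert_of_notMem hk]; omega
      · rw [Finset.sum_insert hk, h0, hsum, zero_add]
      · rw [Finset.prod_insert hk, h0, cl_zero, hprod]
        ring
    · refine ⟨m + 1, ?_, ?_, fun z => ?_⟩
      · rw [Finset.card_insert_of_notMem hk]; omega
      · rw [Finset.sum_insert hk, h1, hsum]
        push_cast
        ring
      · rw [Finset.prod_insert hk, h1, cl_one, hprod]
        ring

/-- Poisson pmf -/
def pois (l : ℝ) (j : ℕ) : ℝ := Real.exp (-l) * l ^ j / (Nat.factorial j)

lemma pois_nonneg {l : ℝ} (hl : 0 ≤ l) (j : ℕ) : 0 ≤ pois l j := by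
  unfold pois
  positivity

lemma summable_pois (l : ℝ) : Summable (pois l) := by
  unfold pois
  simp only [mul_div_assoc]
  exact (Real.summable_pow_div_factorial l).mul_left _

lemma tsum_pois {l : ℝ} : ∑' j, pois l j = 1 := by
  unfold pois
  simp only [mul_div_assoc]
  rw [tsum_mul_left]
  have : ∑' j, l ^ j / (Nat.factorial j : ℝ) = Real.exp l := by
    rw [Real.exp_eq_exp_ℝ, NormedSpace.exp_eq_tsum_div]
  rw [this, ← Real.exp_add]
  simp

lemma isProbability_poissonLaw {l : ℝ} (hl : 0 ≤ l) :
    IsProbabilityMeasure (poissonLaw l) := by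
  constructor
  rw [poissonLaw, Measure.sum_apply _ MeasurableSet.univ]
  have e : ∀ j : ℕ, (ENNReal.ofReal (pois l j) • Measure.dirac ((j : ℝ))) Set.univ
      = ENNReal.ofReal (pois l j) := by
    intro j
    rw [Measure.smul_apply, measure_univ, smul_eq_mul, mul_one]
  have e2 : ∀ j : ℕ, (ENNReal.ofReal (Real.exp (-l) * l ^ j / (Nat.factorial j)) •
      Measure.dirac ((j : ℝ))) Set.univ = ENNReal.ofReal (pois l j) := e
  rw [tsum_congr e2, ← ENNReal.ofReal_tsum_of_nonneg (pois_nonneg hl) (summable_pois l),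
    tsum_pois, ENNReal.ofReal_one]

lemma integral_poissonLaw {l : ℝ} (hl : 0 ≤ l) {f : ℝ → ℝ}
    (hf : AEStronglyMeasurable f (poissonLaw l)) {C : ℝ} (hb : ∀ x, |f x| ≤ C) :
    ∫ x, f x ∂(poissonLaw l) = ∑' j : ℕ, pois l j * f j := by
  haveI := isProbability_poissonLaw hl
  have hint : Integrable f (poissonLaw l) :=
    (integrable_const C).mono' hf (Filter.Eventually.of_forall hb)
  rw [poissonLaw] at hint ⊢
  rw [integral_sum_measure hint]
  refine tsum_congr fun j => ?_
  rw [integral_smul_measure, integral_dirac, smul_eq_mul]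
  congr 1
  exact ENNReal.toReal_ofReal (pois_nonneg hl j)

end Discrete

section Extraction

lemma coeff_extract (a : ℕ → ℕ → ℝ) (b : ℕ → ℝ) (G : ℕ → ℝ → ℝ) (L : ℝ → ℝ)
    (hGn : ∀ n, ∀ z ∈ Set.Ioo (0:ℝ) 1, ∀ j,
      |G n z - ∑ i ∈ Finset.range (j + 1), a n i * z ^ i| ≤ z ^ (j + 1))
    (hL : ∀ z ∈ Set.Ioo (0:ℝ) 1, ∀ j,
      |L z - ∑ i ∈ Finset.range (j + 1), b i * z ^ i| ≤ z ^ (j + 1))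
    (hconv : ∀ z ∈ Set.Ioo (0:ℝ) 1, Tendsto (fun n => G n z) atTop (𝓝 (L z))) :
    ∀ j, Tendsto (fun n => a n j) atTop (𝓝 (b j)) := by
  intro j
  induction j using Nat.strong_induction_on with
  | _ j IH =>
  rw [Metric.tendsto_atTop]
  intro ε hε
  set z : ℝ := min (ε / 8) (1 / 2) with hzdef
  have hz0 : 0 < z := lt_min (by linarith) (by norm_num)
  have hz1 : z < 1 := lt_of_le_of_lt (min_le_right _ _) (by norm_num)
  have hzIoo : z ∈ Set.Ioo (0:ℝ) 1 := ⟨hz0, hz1⟩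
  have hzj : (0:ℝ) < z ^ j := pow_pos hz0 j
  -- eventually: |G n z - L z| ≤ (ε/4) * z^j
  have hev1 : ∀ᶠ n in atTop, |G n z - L z| < (ε / 4) * z ^ j := by
    have := hconv z hzIoo
    rw [Metric.tendsto_atTop] at this
    obtain ⟨N, hN⟩ := this ((ε / 4) * z ^ j) (by positivity)
    exact Filter.eventually_atTop.2 ⟨N, fun n hn => by
      have := hN n hn; rwa [Real.dist_eq] at this⟩
  -- eventually: sum over i < j of |a n i - b i| ≤ (ε/4) * z^j
  have hev2 : ∀ᶠ n in atTop, (∑ i ∈ Finset.range j, |a n i - b i|) < (ε / 4) * z ^ j := by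
    have hsum : Tendsto (fun n => ∑ i ∈ Finset.range j, |a n i - b i|) atTop (𝓝 0) := by
      have : Tendsto (fun n => ∑ i ∈ Finset.range j, |a n i - b i|) atTop
          (𝓝 (∑ i ∈ Finset.range j, |b i - b i|)) := by
        refine tendsto_finset_sum _ fun i hi => ?_
        exact ((IH i (Finset.mem_range.1 hi)).sub tendsto_const_nhds).abs
      simpa using this
    have := (tendsto_order.1 hsum).2 ((ε / 4) * z ^ j) (by positivity)
    exact this
  rw [Filter.eventually_atTop] at hev1 hev2
  obtain ⟨N1, hN1⟩ := hev1
  obtain ⟨N2, hN2⟩ := hev2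
  refine ⟨max N1 N2, fun n hn => ?_⟩
  have h1 := hN1 n (le_trans (le_max_left _ _) hn)
  have h2 := hN2 n (le_trans (le_max_right _ _) hn)
  -- key estimate
  have hkey : |a n j - b j| * z ^ j ≤ 2 * z ^ (j + 1) + |G n z - L z|
      + ∑ i ∈ Finset.range j, |a n i - b i| := by
    have e1 : a n j * z ^ j - b j * z ^ j
        = (∑ i ∈ Finset.range (j + 1), a n i * z ^ i
            - ∑ i ∈ Finset.range (j + 1), b i * z ^ i)
          - ∑ i ∈ Finset.range j, (a n i - b i) * z ^ i := by
      rw [Finset.sum_range_succ, Finset.sum_range_succ,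
        Finset.sum_congr rfl (fun i _ => by ring : ∀ i ∈ Finset.range j,
          (a n i - b i) * z ^ i = a n i * z ^ i - b i * z ^ i),
        Finset.sum_sub_distrib]
      ring
    have e2 : |a n j - b j| * z ^ j = |a n j * z ^ j - b j * z ^ j| := by
      rw [show a n j * z ^ j - b j * z ^ j = (a n j - b j) * z ^ j by ring, abs_mul,
        abs_of_nonneg hzj.le]
    have t1 : |∑ i ∈ Finset.range (j + 1), a n i * z ^ i
        - ∑ i ∈ Finset.range (j + 1), b i * z ^ i|
        ≤ 2 * z ^ (j + 1) + |G n z - L z| := by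
      have u1 := hGn n z hzIoo j
      have u2 := hL z hzIoo j
      calc |∑ i ∈ Finset.range (j + 1), a n i * z ^ i
          - ∑ i ∈ Finset.range (j + 1), b i * z ^ i|
          = |(∑ i ∈ Finset.range (j + 1), a n i * z ^ i - G n z) + (G n z - L z)
            + (L z - ∑ i ∈ Finset.range (j + 1), b i * z ^ i)| := by congr 1; ring
        _ ≤ |∑ i ∈ Finset.range (j + 1), a n i * z ^ i - G n z| + |G n z - L z|
            + |L z - ∑ i ∈ Finset.range (j + 1), b i * z ^ i| := by
          exact (abs_add_le _ _).trans (add_le_add_left (abs_add_le _ _) _)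
        _ ≤ 2 * z ^ (j + 1) + |G n z - L z| := by
          rw [abs_sub_comm] at u1
          linarith
    have t2 : |∑ i ∈ Finset.range j, (a n i - b i) * z ^ i|
        ≤ ∑ i ∈ Finset.range j, |a n i - b i| := by
      refine (Finset.abs_sum_le_sum_abs _ _).trans (Finset.sum_le_sum fun i _ => ?_)
      rw [abs_mul, abs_pow, abs_of_nonneg hz0.le]
      exact mul_le_of_le_one_right (abs_nonneg _) (pow_le_one₀ hz0.le hz1.le)
    calc |a n j - b j| * z ^ j = |a n j * z ^ j - b j * z ^ j| := e2
      _ ≤ |∑ i ∈ Finset.range (j + 1), a n i * z ^ i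
            - ∑ i ∈ Finset.range (j + 1), b i * z ^ i|
          + |∑ i ∈ Finset.range j, (a n i - b i) * z ^ i| := by
        rw [e1]; exact abs_sub _ _
      _ ≤ 2 * z ^ (j + 1) + |G n z - L z| + ∑ i ∈ Finset.range j, |a n i - b i| := by
        linarith
  -- conclude
  have hz8 : z ≤ ε / 8 := min_le_left _ _
  have hstep : |a n j - b j| * z ^ j < (ε / 4) * z ^ j + (ε / 4) * z ^ j + (ε / 4) * z ^ j := by
    have h3 : 2 * z ^ (j + 1) ≤ (ε / 4) * z ^ j := by
      rw [pow_succ]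
      calc 2 * (z ^ j * z) = (2 * z) * z ^ j := by ring
        _ ≤ (ε / 4) * z ^ j := by
          refine mul_le_mul_of_nonneg_right ?_ hzj.le
          linarith
    linarith
  rw [Real.dist_eq]
  have hlt : |a n j - b j| * z ^ j < (3 * ε / 4) * z ^ j := by linarith
  have := lt_of_mul_lt_mul_right hlt hzj.le
  linarith

lemma scheffe (a : ℕ → ℕ → ℝ) (b : ℕ → ℝ) (ha0 : ∀ n j, 0 ≤ a n j)
    (hb0 : ∀ j, 0 ≤ b j) (hasum : ∀ n, Summable (a n)) (hatot : ∀ n, ∑' j, a n j = 1)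
    (hbsum : Summable b) (hbtot : ∑' j, b j = 1)
    (hpt : ∀ j, Tendsto (fun n => a n j) atTop (𝓝 (b j))) :
    Tendsto (fun n => ∑' j, |a n j - b j|) atTop (𝓝 0) := by
  have hmax_sum : ∀ n, Summable (fun j => max (b j - a n j) 0) := fun n =>
    hbsum.of_nonneg_of_le (fun j => le_max_right _ _)
      (fun j => max_le (by linarith [ha0 n j]) (hb0 j))
  have hdiff_sum : ∀ n, Summable (fun j => a n j - b j) := fun n => (hasum n).sub hbsum
  have habs_eq : ∀ n, (fun j => |a n j - b j|)
      = fun j => (a n j - b j) + 2 * max (b j - a n j) 0 := by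
    intro n
    ext j
    rcases le_total (b j) (a n j) with h | h
    · rw [abs_of_nonneg (by linarith), max_eq_right (by linarith)]
      ring
    · rw [abs_of_nonpos (by linarith), max_eq_left (by linarith)]
      ring
  have htsum_eq : ∀ n, ∑' j, |a n j - b j| = 2 * ∑' j, max (b j - a n j) 0 := by
    intro n
    rw [habs_eq n, Summable.tsum_add (hdiff_sum n) (((hmax_sum n)).mul_left 2),
      Summable.tsum_sub (hasum n) hbsum, hatot n, hbtot, tsum_mul_left]
    ring
  have hmain : Tendsto (fun n => ∑' j, max (b j - a n j) 0) atTop (𝓝 0) := by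
    have hm : Tendsto (fun n => ∑' j, max (b j - a n j) 0) atTop
        (𝓝 (∑' j : ℕ, max (b j - b j) 0)) := by
      refine tendsto_tsum_of_dominated_convergence hbsum (fun j => ?_) ?_
      · exact (tendsto_const_nhds.sub (hpt j)).max tendsto_const_nhds
      · refine Filter.Eventually.of_forall fun n j => ?_
        rw [Real.norm_eq_abs, abs_of_nonneg (le_max_right _ _)]
        exact max_le (by linarith [ha0 n j]) (hb0 j)
    simpa using hm
  have : Tendsto (fun n => 2 * ∑' j, max (b j - a n j) 0) atTop (𝓝 (2 * 0)) :=
    hmain.const_mul 2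
  rw [mul_zero] at this
  refine this.congr fun n => (htsum_eq n).symm

end Extraction

section Conv

variable {Ω : Type*} [MeasurableSpace Ω] (P : Measure Ω) [IsProbabilityMeasure P]

lemma rcov_abs_le_two {U V : Ω → ℝ} (hU : Measurable U) (hV : Measurable V)
    (hbU : ∀ᵐ ω ∂P, |U ω| ≤ 1) (hbV : ∀ᵐ ω ∂P, |V ω| ≤ 1) :
    |rcov P U V| ≤ 2 := by
  have h1 : |∫ ω, U ω * V ω ∂P| ≤ 1 := by
    have := norm_integral_le_of_norm_le_const (μ := P) (f := fun ω => U ω * V ω) (C := 1)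
      (by filter_upwards [hbU, hbV] with ω h1 h2
          rw [Real.norm_eq_abs, abs_mul]
          exact mul_le_one₀ h1 (abs_nonneg _) h2)
    simpa using this
  have h2 : |∫ ω, U ω ∂P| ≤ 1 := by
    have := norm_integral_le_of_norm_le_const (μ := P) (f := U) (C := 1)
      (by filter_upwards [hbU] with ω h; rwa [Real.norm_eq_abs])
    simpa using this
  have h3 : |∫ ω, V ω ∂P| ≤ 1 := by
    have := norm_integral_le_of_norm_le_const (μ := P) (f := V) (C := 1)
      (by filter_upwards [hbV] with ω h; rwa [Real.norm_eq_abs])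
    simpa using this
  unfold rcov
  calc |∫ ω, U ω * V ω ∂P - (∫ ω, U ω ∂P) * ∫ ω, V ω ∂P|
      ≤ |∫ ω, U ω * V ω ∂P| + |(∫ ω, U ω ∂P) * ∫ ω, V ω ∂P| := abs_sub _ _
    _ ≤ 2 := by
      rw [abs_mul]
      nlinarith [abs_nonneg (∫ ω, U ω ∂P), abs_nonneg (∫ ω, V ω ∂P),
        abs_nonneg (∫ ω, U ω * V ω ∂P)]

variable (X : ℕ → ℕ → Ω → ℝ) (kk : ℕ → ℕ) (p : ℕ → ℕ → ℝ) (lam : ℝ)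
  (hmeas : ∀ n k, Measurable (X n k))
  (hassoc : ∀ n, AssociatedRVs P (fun i : Fin (kk n) => X n (i : ℕ)))
  (hlaw : ∀ n, ∀ k < kk n, Measure.map (X n k) P = bernoulliLaw (p n k))

include hmeas hassoc hlaw

lemma rcov_X_nonneg {n r s : ℕ} (hr : r < kk n) (hs : s < kk n) :
    0 ≤ rcov P (X n r) (X n s) := by
  have h := rcov_cl_nonneg P (fun i : Fin (kk n) => X n (i : ℕ))
    (fun i => hmeas n i) (hassoc n) ⟨r, hr⟩ ⟨s, hs⟩
  have e := rcov_cl_eq P (fun i : Fin (kk n) => X n (i : ℕ)) (fun i => hmeas n i)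
    (fun i : Fin (kk n) => p n (i : ℕ)) (fun i => hlaw n i i.2) ⟨r, hr⟩ ⟨s, hs⟩
  rw [e] at h
  exact h

lemma rcov_X_le_two {n r s : ℕ} (hr : r < kk n) (hs : s < kk n) :
    rcov P (X n r) (X n s) ≤ 2 := by
  have hb : ∀ t (ht : t < kk n), ∀ᵐ ω ∂P, |X n t ω| ≤ 1 := fun t ht =>
    (ae_mem_01 P (hmeas n t) (hlaw n t ht)).mono fun ω h => by
      simp only [Set.mem_insert_iff, Set.mem_singleton_iff] at h
      rcases h with h | h <;> simp [h]
  have := rcov_abs_le_two P (hmeas n r) (hmeas n s) (hb r hr) (hb s hs)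
  exact (abs_le.1 this).2

lemma Gn_tendsto
    (hk : Tendsto kk atTop atTop) (hlam : 0 < lam)
    (h2b : Tendsto (fun n => ∑ k ∈ Finset.range (kk n), p n k) atTop (𝓝 lam))
    (h2c : Tendsto (fun n => (kk n : ℝ) * (⨆ k ∈ Finset.range (kk n), p n k) ^ 2)
      atTop (𝓝 0))
    (h2d : Tendsto
      (fun n => (kk n : ℝ) ^ 2 *
        ⨆ r ∈ Finset.range (kk n), ⨆ s ∈ Finset.range (kk n), ⨆ _ : r ≠ s,
          rcov P (X n r) (X n s))
      atTop (𝓝 0))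
    {z : ℝ} (hz : z ∈ Set.Icc (0:ℝ) 1) :
    Tendsto (fun n => ∫ ω, ∏ k ∈ Finset.range (kk n), (1 - (1 - z) * cl (X n k ω)) ∂P)
      atTop (𝓝 (Real.exp (-(1 - z) * lam))) := by
  set G : ℕ → ℝ := fun n => ∫ ω, ∏ k ∈ Finset.range (kk n), (1 - (1 - z) * cl (X n k ω)) ∂P
    with hGdef
  set A : ℕ → ℝ := fun n => ∑ r : Fin (kk n), ∑ t : Fin (kk n),
    (if r ≠ t then rcov P (X n (r : ℕ)) (X n (t : ℕ)) else 0) with hAdef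
  set C : ℕ → ℝ := fun n => ∑ i : Fin (kk n), (p n (i : ℕ)) ^ 2 with hCdef
  set E : ℕ → ℝ := fun n =>
    |Real.exp (-(1 - z) * ∑ k ∈ Finset.range (kk n), p n k) - Real.exp (-(1 - z) * lam)|
    with hEdef
  -- the distance bound
  have hdist : ∀ n, |G n - Real.exp (-(1 - z) * lam)| ≤ A n + C n + E n := by
    intro n
    have hq : ∀ i : Fin (kk n), p n (i : ℕ) ∈ Set.Icc (0:ℝ) 1 := fun i =>
      law_q_mem P (hmeas n i) (hlaw n i i.2)
    have hkey := key_bound P (fun i : Fin (kk n) => X n (i : ℕ)) (fun i => hmeas n i)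
      (hassoc n) (fun i : Fin (kk n) => p n (i : ℕ)) (fun i => hlaw n i i.2) hz
    have hpexp := prod_exp_bound (fun i : Fin (kk n) => p n (i : ℕ)) hq hz
    have hGn : G n = ∫ ω, ∏ i : Fin (kk n), (1 - (1 - z) * cl (X n (i : ℕ) ω)) ∂P := by
      rw [hGdef]
      simp only
      congr 1
      ext ω
      rw [Fin.prod_univ_eq_prod_range (fun k => (1 - (1 - z) * cl (X n k ω))) (kk n)]
    have hsum_eq : ∑ i : Fin (kk n), p n (i : ℕ) = ∑ k ∈ Finset.range (kk n), p n k :=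
      Fin.sum_univ_eq_sum_range (fun k => p n k) (kk n)
    rw [hGn]
    rw [hsum_eq] at hpexp
    calc |(∫ ω, ∏ i : Fin (kk n), (1 - (1 - z) * cl (X n (i : ℕ) ω)) ∂P)
        - Real.exp (-(1 - z) * lam)|
        ≤ |(∫ ω, ∏ i : Fin (kk n), (1 - (1 - z) * cl (X n (i : ℕ) ω)) ∂P)
            - ∏ i : Fin (kk n), (1 - (1 - z) * p n (i : ℕ))|
          + |(∏ i : Fin (kk n), (1 - (1 - z) * p n (i : ℕ)))
            - Real.exp (-(1 - z) * ∑ k ∈ Finset.range (kk n), p n k)|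
          + |Real.exp (-(1 - z) * ∑ k ∈ Finset.range (kk n), p n k)
            - Real.exp (-(1 - z) * lam)| := by
          have := abs_sub_abs_le_abs_sub ((∫ ω, ∏ i : Fin (kk n),
            (1 - (1 - z) * cl (X n (i : ℕ) ω)) ∂P)) (Real.exp (-(1 - z) * lam))
          calc |(∫ ω, ∏ i : Fin (kk n), (1 - (1 - z) * cl (X n (i : ℕ) ω)) ∂P)
              - Real.exp (-(1 - z) * lam)| = |((∫ ω, ∏ i : Fin (kk n),
                (1 - (1 - z) * cl (X n (i : ℕ) ω)) ∂P)
                - ∏ i : Fin (kk n), (1 - (1 - z) * p n (i : ℕ)))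
              + ((∏ i : Fin (kk n), (1 - (1 - z) * p n (i : ℕ)))
                - Real.exp (-(1 - z) * ∑ k ∈ Finset.range (kk n), p n k))
              + (Real.exp (-(1 - z) * ∑ k ∈ Finset.range (kk n), p n k)
                - Real.exp (-(1 - z) * lam))| := by congr 1; ring
            _ ≤ _ := (abs_add_le _ _).trans (add_le_add_left (abs_add_le _ _) _)
      _ ≤ A n + C n + E n := by
          refine add_le_add (add_le_add ?_ ?_) le_rfl
          · exact hkey
          · exact hpexp
    done
  -- A n tends to 0
  have hAnonneg : ∀ n, 0 ≤ A n := fun n =>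
    Finset.sum_nonneg fun r _ => Finset.sum_nonneg fun t _ => by
      by_cases h : r ≠ t
      · rw [if_pos h]
        exact rcov_X_nonneg P X kk p hmeas hassoc hlaw r.2 t.2
      · rw [if_neg h]
  have hA0 : Tendsto A atTop (𝓝 0) := by
    refine squeeze_zero' (Filter.Eventually.of_forall hAnonneg) ?_ h2d
    filter_upwards [hk.eventually_ge_atTop 2] with n hn2
    set V : ℝ := ⨆ r ∈ Finset.range (kk n), ⨆ s ∈ Finset.range (kk n), ⨆ _ : r ≠ s,
      rcov P (X n r) (X n s) with hVdef
    have hinner_le : ∀ r s : ℕ, r < kk n → s < kk n →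
        (⨆ _ : r ≠ s, rcov P (X n r) (X n s)) ≤ 2 := by
      intro r s hr hs
      by_cases h : r ≠ s
      · rw [ciSup_pos h]
        exact rcov_X_le_two P X kk p hmeas hassoc hlaw hr hs
      · haveI : IsEmpty (r ≠ s : Prop) := isEmpty_Prop.2 h
        rw [Real.iSup_of_isEmpty]
        norm_num
    have hg_le : ∀ r < kk n, (⨆ s ∈ Finset.range (kk n), ⨆ _ : r ≠ s,
        rcov P (X n r) (X n s)) ≤ 2 := fun r hr =>
      biSup_mem_le (fun s hs => hinner_le r s hr hs) (by norm_num)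
    have hterm_le : ∀ r s : ℕ, r < kk n → s < kk n → r ≠ s →
        rcov P (X n r) (X n s) ≤ V := by
      intro r s hr hs hrs
      have s1 : rcov P (X n r) (X n s) = ⨆ _ : r ≠ s, rcov P (X n r) (X n s) :=
        (ciSup_pos (f := fun _ : r ≠ s => rcov P (X n r) (X n s)) hrs).symm
      have s2 : (⨆ _ : r ≠ s, rcov P (X n r) (X n s))
          ≤ ⨆ s ∈ Finset.range (kk n), ⨆ _ : r ≠ s, rcov P (X n r) (X n s) :=
        le_biSup_mem (f := fun s => ⨆ _ : r ≠ s, rcov P (X n r) (X n s))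
          (fun s hs => hinner_le r s hr hs) hs
      have s3 : (⨆ s ∈ Finset.range (kk n), ⨆ _ : r ≠ s, rcov P (X n r) (X n s)) ≤ V :=
        le_biSup_mem (f := fun r => ⨆ s ∈ Finset.range (kk n), ⨆ _ : r ≠ s,
          rcov P (X n r) (X n s)) hg_le hr
      rw [s1]
      exact s2.trans s3
    have hV0 : 0 ≤ V := by
      have h01 : (0:ℕ) ≠ 1 := by norm_num
      have := hterm_le 0 1 (by omega) (by omega) h01
      exact (rcov_X_nonneg P X kk p hmeas hassoc hlaw (by omega) (by omega)).trans this
    have : A n ≤ ∑ r : Fin (kk n), ∑ t : Fin (kk n), V := by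
      refine Finset.sum_le_sum fun r _ => Finset.sum_le_sum fun t _ => ?_
      by_cases h : r ≠ t
      · rw [if_pos h]
        exact hterm_le r t r.2 t.2 (fun hc => h (Fin.ext hc))
      · rw [if_neg h]
        exact hV0
    calc A n ≤ ∑ r : Fin (kk n), ∑ t : Fin (kk n), V := this
      _ = (kk n : ℝ) ^ 2 * V := by
        rw [Finset.sum_const, Finset.sum_const, Finset.card_univ, Fintype.card_fin]
        simp [nsmul_eq_mul]
        ring
  -- C n tends to 0
  have hCnonneg : ∀ n, 0 ≤ C n := fun n => Finset.sum_nonneg fun i _ => sq_nonneg _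
  have hC0 : Tendsto C atTop (𝓝 0) := by
    refine squeeze_zero' (Filter.Eventually.of_forall hCnonneg) ?_ h2c
    filter_upwards [hk.eventually_ge_atTop 1] with n hn1
    set pbar : ℝ := ⨆ k ∈ Finset.range (kk n), p n k with hpdef
    have hub : ∀ i < kk n, p n i ≤ 1 := fun i hi => (law_q_mem P (hmeas n i) (hlaw n i hi)).2
    have hple : ∀ i : Fin (kk n), p n (i : ℕ) ≤ pbar := fun i =>
      le_biSup_mem hub i.2
    have hp0 : ∀ i : Fin (kk n), 0 ≤ p n (i : ℕ) := fun i =>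
      (law_q_mem P (hmeas n i) (hlaw n i i.2)).1
    have : C n ≤ ∑ _i : Fin (kk n), pbar ^ 2 := by
      refine Finset.sum_le_sum fun i _ => ?_
      exact pow_le_pow_left₀ (hp0 i) (hple i) 2
    calc C n ≤ ∑ _i : Fin (kk n), pbar ^ 2 := this
      _ = (kk n : ℝ) * pbar ^ 2 := by
        rw [Finset.sum_const, Finset.card_univ, Fintype.card_fin, nsmul_eq_mul]
  -- E n tends to 0
  have hE0 : Tendsto E atTop (𝓝 0) := by
    have h1 : Tendsto (fun n => Real.exp (-(1 - z) * ∑ k ∈ Finset.range (kk n), p n k))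
        atTop (𝓝 (Real.exp (-(1 - z) * lam))) :=
      (Real.continuous_exp.tendsto _).comp ((tendsto_const_nhds.mul h2b).congr fun n => rfl)
    have h2 : Tendsto (fun n => Real.exp (-(1 - z) * ∑ k ∈ Finset.range (kk n), p n k)
        - Real.exp (-(1 - z) * lam)) atTop (𝓝 (Real.exp (-(1 - z) * lam)
        - Real.exp (-(1 - z) * lam))) := h1.sub tendsto_const_nhds
    have h3 := h2.abs
    rw [hEdef]
    simpa using h3
  -- combine
  rw [tendsto_iff_dist_tendsto_zero]
  refine squeeze_zero' (g := fun n => A n + C n + E n)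
    (Filter.Eventually.of_forall fun n => dist_nonneg)
    (Filter.Eventually.of_forall fun n => ?_) ?_
  · rw [Real.dist_eq]
    exact hdist n
  · have := (hA0.add hC0).add hE0
    simpa using this

end Conv
end PoisAux



set_option maxHeartbeats 2000000 in
open PoisAux in
/-- **Theorem 4.3 (conv_Bern_Pois_Gen).** Poisson CLT for a by-row associated array of
(not necessarily stationary) Bernoulli variables. Indices within a row are 0-based:
`X n k` is `X_{k+1,n}`, and the block variable `X'_{h,j,n}` is `X n (j * ll n + h)`. -/
theorem stmt_4 {Ω : Type*} [MeasurableSpace Ω] (P : Measure Ω) [IsProbabilityMeasure P]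
    (X : ℕ → ℕ → Ω → ℝ) (kk mm ll rr : ℕ → ℕ)
    (hmeas : ∀ n k, Measurable (X n k))
    (hL2 : ∀ n, ∀ k < kk n, MemLp (X n k) 2 P)
    (hk : Tendsto kk atTop atTop)
    (hdecomp : ∀ n, kk n = mm n * ll n + rr n)
    (hm1 : ∀ n, 1 ≤ mm n) (hm : Tendsto mm atTop atTop)
    (hr : ∀ n, rr n < ll n)
    (hlm : Tendsto (fun n => (ll n : ℝ) / (mm n : ℝ)) atTop (𝓝 0))
    (p : ℕ → ℕ → ℝ) (lam : ℝ) (hlam : 0 < lam)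
    (hassoc : ∀ n, AssociatedRVs P (fun i : Fin (kk n) => X n (i : ℕ)))
    (hlaw : ∀ n, ∀ k < kk n, Measure.map (X n k) P = bernoulliLaw (p n k))
    (h2a : Tendsto (fun n => ⨆ k ∈ Finset.range (kk n), p n k) atTop (𝓝 0))
    (h2b : Tendsto (fun n => ∑ k ∈ Finset.range (kk n), p n k) atTop (𝓝 lam))
    (h2c : Tendsto (fun n => (kk n : ℝ) * (⨆ k ∈ Finset.range (kk n), p n k) ^ 2)
      atTop (𝓝 0))
    (h2d : Tendsto
      (fun n => (kk n : ℝ) ^ 2 *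
        ⨆ r ∈ Finset.range (kk n), ⨆ s ∈ Finset.range (kk n), ⨆ _ : r ≠ s,
          rcov P (X n r) (X n s))
      atTop (𝓝 0))
    (h3 : Tendsto (fun n => ∑ h ∈ Finset.range (rr n), p n (mm n * ll n + h)) atTop (𝓝 0))
    (h4a : Tendsto
      (fun n => (mm n : ℝ) *
        ⨆ j ∈ Finset.range (mm n),
          ∑ r ∈ Finset.range (ll n), ∑ s ∈ Finset.range (ll n),
            if r ≠ s then rcov P (X n (j * ll n + r)) (X n (j * ll n + s)) else 0)
      atTop (𝓝 0))
    (h4b : Tendsto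
      (fun n => ∑ r ∈ Finset.range (rr n), ∑ s ∈ Finset.range (rr n),
        if r ≠ s then rcov P (X n (mm n * ll n + r)) (X n (mm n * ll n + s)) else 0)
      atTop (𝓝 0)) :
    TendstoInDistribution P (fun n ω => ∑ k ∈ Finset.range (kk n), X n k ω)
      (poissonLaw lam) := by
  classical
  intro f
  -- basic setup
  have hSm : ∀ n, Measurable (fun ω => ∑ k ∈ Finset.range (kk n), X n k ω) := fun n =>
    Finset.measurable_sum _ fun k _ => hmeas n k
  set S : ℕ → Ω → ℝ := fun n ω => ∑ k ∈ Finset.range (kk n), X n k ω with hSdef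
  set ν : ℕ → Measure ℝ := fun n => Measure.map (S n) P with hνdef
  have hprob : ∀ n, IsProbabilityMeasure (ν n) := fun n =>
    Measure.isProbabilityMeasure_map (hSm n).aemeasurable
  set a : ℕ → ℕ → ℝ := fun n j => ((ν n) {(j : ℝ)}).toReal with hadef
  set b : ℕ → ℝ := fun j => pois lam j with hbdef
  set T : ℕ → Finset ℝ := fun n => (Finset.range (kk n + 1)).image (fun j : ℕ => (j : ℝ))
    with hTdef
  -- a.s. 0/1 values
  have hae : ∀ n, ∀ᵐ ω ∂P, ∀ k, k < kk n → X n k ω ∈ ({0, 1} : Set ℝ) := by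
    intro n
    rw [ae_all_iff]
    intro k
    by_cases hk' : k < kk n
    · exact (ae_mem_01 P (hmeas n k) (hlaw n k hk')).mono fun ω h _ => h
    · exact Filter.Eventually.of_forall fun ω h => absurd h hk'
  have hgood : ∀ n, ∀ᵐ ω ∂P, ∃ m : ℕ, m ≤ kk n ∧ S n ω = m ∧
      ∀ z : ℝ, ∏ k ∈ Finset.range (kk n), (1 - (1 - z) * cl (X n k ω)) = z ^ m := by
    intro n
    refine (hae n).mono fun ω h => ?_
    obtain ⟨m, hm', hsum, hprod⟩ := prod_eq_pow_sum (Finset.range (kk n))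
      (fun k => X n k ω) (fun k hk' => h k (Finset.mem_range.1 hk'))
    exact ⟨m, by simpa using hm', hsum, hprod⟩
  have hmemT : ∀ n, ∀ᵐ ω ∂P, S n ω ∈ (↑(T n) : Set ℝ) := by
    intro n
    refine (hgood n).mono fun ω h => ?_
    obtain ⟨m, hm', hsum, -⟩ := h
    rw [hsum]
    exact Finset.mem_coe.2 (Finset.mem_image.2 ⟨m, Finset.mem_range.2 (by omega), rfl⟩)
  have hTnull : ∀ n, (ν n) ((↑(T n) : Set ℝ))ᶜ = 0 := by
    intro n
    rw [hνdef]
    simp only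
    rw [Measure.map_apply (hSm n) (T n).measurableSet.compl]
    have h := hmemT n
    rw [ae_iff] at h
    rw [Set.preimage_compl]
    have he : (S n ⁻¹' (↑(T n) : Set ℝ))ᶜ = {ω | ¬ S n ω ∈ (↑(T n) : Set ℝ)} := rfl
    rw [he]
    exact h
  -- the summation formula
  have hInt : ∀ n (g : ℝ → ℝ), Measurable g → ∀ C : ℝ, (∀ x, |g x| ≤ C) →
      ∫ x, g x ∂(ν n) = ∑ j ∈ Finset.range (kk n + 1), g j * a n j := by
    intro n g hg C hb
    haveI := hprob n
    rw [integral_of_finite_support (ν n) (T n) (hTnull n) hg hb, hTdef]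
    simp only
    rw [Finset.sum_image (fun x _ y _ h => Nat.cast_injective h)]
  have ha0 : ∀ n j, 0 ≤ a n j := fun n j => ENNReal.toReal_nonneg
  have hsum1 : ∀ n, ∑ j ∈ Finset.range (kk n + 1), a n j = 1 := by
    intro n
    haveI := hprob n
    have h := hInt n (fun _ => (1 : ℝ)) measurable_const 1 (by norm_num)
    rw [integral_const] at h
    simp only [measure_univ, probReal_univ, ENNReal.toReal_one, smul_eq_mul, one_mul] at h
    rw [← h]
  have haz : ∀ n j, kk n + 1 ≤ j → a n j = 0 := by
    intro n j hj
    have hnot : ((j : ℝ)) ∈ ((↑(T n) : Set ℝ))ᶜ := by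
      intro hmem
      rw [hTdef] at hmem
      simp only [Finset.coe_image, Set.mem_image, Finset.mem_coe] at hmem
      obtain ⟨i, hi, hie⟩ := hmem
      have : i = j := Nat.cast_injective hie
      rw [this] at hi
      have := Finset.mem_range.1 hi
      omega
    have hle : (ν n) {(j : ℝ)} ≤ (ν n) ((↑(T n) : Set ℝ))ᶜ :=
      measure_mono (Set.singleton_subset_iff.2 hnot)
    rw [hTnull n] at hle
    rw [hadef]
    simp only
    rw [le_zero_iff.1 hle]
    rfl
  have hasummable : ∀ n, Summable (a n) := fun n =>
    summable_of_ne_finset_zero (s := Finset.range (kk n + 1)) fun j hj =>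
      haz n j (by simpa using hj)
  have hatot : ∀ n, ∑' j, a n j = 1 := fun n =>
    (tsum_eq_sum fun j hj => haz n j (by simpa using hj)).trans (hsum1 n)
  have hb0 : ∀ j, 0 ≤ b j := fun j => pois_nonneg hlam.le j
  have hbsum : Summable b := summable_pois lam
  have hbtot : ∑' j, b j = 1 := tsum_pois
  -- generating functions
  set G : ℕ → ℝ → ℝ := fun n z =>
    ∫ ω, ∏ k ∈ Finset.range (kk n), (1 - (1 - z) * cl (X n k ω)) ∂P with hGdef
  set L : ℝ → ℝ := fun z => Real.exp (-(1 - z) * lam) with hLdef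
  have hGid : ∀ n, ∀ z ∈ Set.Icc (0:ℝ) 1,
      G n z = ∑ j ∈ Finset.range (kk n + 1), a n j * z ^ j := by
    intro n z hz
    set φ : ℝ → ℝ := fun t => z ^ (⌊t⌋₊) with hφdef
    have hφm : Measurable φ := measurable_from_nat.comp Nat.measurable_floor
    have hφb : ∀ t, |φ t| ≤ 1 := fun t => by
      rw [hφdef]
      simp only
      rw [abs_of_nonneg (pow_nonneg hz.1 _)]
      exact pow_le_one₀ hz.1 hz.2
    have step1 : G n z = ∫ ω, φ (S n ω) ∂P := by
      rw [hGdef]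
      simp only
      refine integral_congr_ae ((hgood n).mono fun ω h => ?_)
      obtain ⟨m, hm', hsum, hprod⟩ := h
      simp only
      rw [hprod z, hsum, hφdef]
      simp only
      rw [Nat.floor_natCast]
    have step2 : ∫ ω, φ (S n ω) ∂P = ∫ x, φ x ∂(ν n) := by
      rw [hνdef]
      simp only
      rw [integral_map (hSm n).aemeasurable hφm.aestronglyMeasurable]
    have step3 : ∫ x, φ x ∂(ν n) = ∑ j ∈ Finset.range (kk n + 1), φ j * a n j :=
      hInt n φ hφm 1 hφb
    rw [step1, step2, step3]
    refine Finset.sum_congr rfl fun j _ => ?_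
    rw [hφdef]
    simp only
    rw [Nat.floor_natCast, mul_comm]
  -- tail bound for G n
  have hsumM : ∀ n (M : ℕ), kk n + 1 ≤ M → ∀ z : ℝ,
      ∑ j ∈ Finset.range (kk n + 1), a n j * z ^ j
        = ∑ j ∈ Finset.range M, a n j * z ^ j := by
    intro n M hM z
    refine Finset.sum_subset (Finset.range_subset_range.2 hM) fun i _ hnot => ?_
    rw [haz n i (by simpa using hnot), zero_mul]
  have hGtail : ∀ n, ∀ z ∈ Set.Ioo (0:ℝ) 1, ∀ j,
      |G n z - ∑ i ∈ Finset.range (j + 1), a n i * z ^ i| ≤ z ^ (j + 1) := by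
    intro n z hz j
    have hzIcc : z ∈ Set.Icc (0:ℝ) 1 := ⟨hz.1.le, hz.2.le⟩
    set M : ℕ := max (kk n + 1) (j + 1) with hMdef
    have hM1 : kk n + 1 ≤ M := le_max_left _ _
    have hM2 : j + 1 ≤ M := le_max_right _ _
    rw [hGid n z hzIcc, hsumM n M hM1 z]
    have hsplit : ∑ i ∈ Finset.range (j + 1), a n i * z ^ i
        + ∑ i ∈ Finset.Ico (j + 1) M, a n i * z ^ i
        = ∑ i ∈ Finset.range M, a n i * z ^ i :=
      Finset.sum_range_add_sum_Ico _ hM2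
    have hR0 : 0 ≤ ∑ i ∈ Finset.Ico (j + 1) M, a n i * z ^ i :=
      Finset.sum_nonneg fun i _ => mul_nonneg (ha0 n i) (pow_nonneg hz.1.le _)
    have hRle : ∑ i ∈ Finset.Ico (j + 1) M, a n i * z ^ i ≤ z ^ (j + 1) := by
      have h1 : ∑ i ∈ Finset.Ico (j + 1) M, a n i * z ^ i
          ≤ ∑ i ∈ Finset.Ico (j + 1) M, a n i * z ^ (j + 1) := by
        refine Finset.sum_le_sum fun i hi => ?_
        refine mul_le_mul_of_nonneg_left ?_ (ha0 n i)
        exact pow_le_pow_of_le_one hz.1.le hz.2.le (Finset.mem_Ico.1 hi).1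
      have h2 : ∑ i ∈ Finset.Ico (j + 1) M, a n i * z ^ (j + 1)
          = (∑ i ∈ Finset.Ico (j + 1) M, a n i) * z ^ (j + 1) :=
        (Finset.sum_mul _ _ _).symm
      have h3 : ∑ i ∈ Finset.Ico (j + 1) M, a n i ≤ 1 := by
        have hsub : Finset.Ico (j + 1) M ⊆ Finset.range M := fun i hi =>
          Finset.mem_range.2 (Finset.mem_Ico.1 hi).2
        have h4 : ∑ i ∈ Finset.Ico (j + 1) M, a n i ≤ ∑ i ∈ Finset.range M, a n i :=
          Finset.sum_le_sum_of_subset_of_nonneg hsub fun i _ _ => ha0 n i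
        have h5 : ∑ i ∈ Finset.range M, a n i = 1 := by
          have he := hsumM n M hM1 1
          simp only [one_pow, mul_one] at he
          rw [← he]
          exact hsum1 n
        rw [h5] at h4
        exact h4
      calc ∑ i ∈ Finset.Ico (j + 1) M, a n i * z ^ i
          ≤ (∑ i ∈ Finset.Ico (j + 1) M, a n i) * z ^ (j + 1) := by rw [← h2]; exact h1
        _ ≤ 1 * z ^ (j + 1) :=
            mul_le_mul_of_nonneg_right h3 (pow_nonneg hz.1.le _)
        _ = z ^ (j + 1) := one_mul _
    rw [show ∑ i ∈ Finset.range M, a n i * z ^ i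
        - ∑ i ∈ Finset.range (j + 1), a n i * z ^ i
        = ∑ i ∈ Finset.Ico (j + 1) M, a n i * z ^ i by rw [← hsplit]; ring]
    rw [abs_of_nonneg hR0]
    exact hRle
  -- tail bound for L
  have hLtail : ∀ z ∈ Set.Ioo (0:ℝ) 1, ∀ j,
      |L z - ∑ i ∈ Finset.range (j + 1), b i * z ^ i| ≤ z ^ (j + 1) := by
    intro z hz j
    have hbz : ∀ i, b i * z ^ i = Real.exp (-lam) * ((lam * z) ^ i / (Nat.factorial i)) := by
      intro i
      rw [hbdef]
      simp only [pois]
      rw [mul_pow]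
      ring
    have hbz_sum : Summable (fun i => b i * z ^ i) :=
      (((Real.summable_pow_div_factorial (lam * z)).mul_left (Real.exp (-lam)))).congr
        fun i => (hbz i).symm
    have hLts : L z = ∑' i, b i * z ^ i := by
      rw [tsum_congr hbz, tsum_mul_left]
      have he : ∑' i, (lam * z) ^ i / (Nat.factorial i : ℝ) = Real.exp (lam * z) := by
        rw [Real.exp_eq_exp_ℝ, NormedSpace.exp_eq_tsum_div]
      rw [he, ← Real.exp_add, hLdef]
      simp only
      congr 1
      ring
    have hshift := Summable.sum_add_tsum_nat_add (f := fun i => b i * z ^ i) (j + 1) hbz_sum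
    have htail_sum : Summable (fun i => b (i + (j + 1)) * z ^ (i + (j + 1))) :=
      (summable_nat_add_iff (j + 1)).2 hbz_sum
    have hR0 : 0 ≤ ∑' i, b (i + (j + 1)) * z ^ (i + (j + 1)) :=
      tsum_nonneg fun i => mul_nonneg (hb0 _) (pow_nonneg hz.1.le _)
    have hRle : ∑' i, b (i + (j + 1)) * z ^ (i + (j + 1)) ≤ z ^ (j + 1) := by
      have hb_shift : Summable (fun i => b (i + (j + 1))) :=
        (summable_nat_add_iff (j + 1)).2 hbsum
      have h1 : ∑' i, b (i + (j + 1)) * z ^ (i + (j + 1))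
          ≤ ∑' i, b (i + (j + 1)) * z ^ (j + 1) := by
        refine Summable.tsum_le_tsum (fun i => ?_) htail_sum (hb_shift.mul_right _)
        refine mul_le_mul_of_nonneg_left ?_ (hb0 _)
        exact pow_le_pow_of_le_one hz.1.le hz.2.le (by omega)
      have h2 : ∑' i, b (i + (j + 1)) * z ^ (j + 1)
          = (∑' i, b (i + (j + 1))) * z ^ (j + 1) := tsum_mul_right
      have h3 : ∑' i, b (i + (j + 1)) ≤ 1 := by
        have hshift2 := Summable.sum_add_tsum_nat_add (f := b) (j + 1) hbsum
        have hpart : 0 ≤ ∑ i ∈ Finset.range (j + 1), b i :=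
          Finset.sum_nonneg fun i _ => hb0 i
        rw [hbtot] at hshift2
        linarith
      calc ∑' i, b (i + (j + 1)) * z ^ (i + (j + 1))
          ≤ (∑' i, b (i + (j + 1))) * z ^ (j + 1) := h1.trans_eq h2
        _ ≤ 1 * z ^ (j + 1) := mul_le_mul_of_nonneg_right h3 (pow_nonneg hz.1.le _)
        _ = z ^ (j + 1) := one_mul _
    have heq : L z - ∑ i ∈ Finset.range (j + 1), b i * z ^ i
        = ∑' i, b (i + (j + 1)) * z ^ (i + (j + 1)) := by
      rw [hLts, ← hshift]
      ring
    rw [heq, abs_of_nonneg hR0]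
    exact hRle
  -- convergence of the generating functions
  have hGL : ∀ z ∈ Set.Ioo (0:ℝ) 1, Tendsto (fun n => G n z) atTop (𝓝 (L z)) := by
    intro z hz
    exact Gn_tendsto P X kk p lam hmeas hassoc hlaw hk hlam h2b h2c h2d ⟨hz.1.le, hz.2.le⟩
  -- pointwise convergence of the pmf
  have hpt : ∀ j, Tendsto (fun n => a n j) atTop (𝓝 (b j)) :=
    coeff_extract a b G L hGtail hLtail hGL
  have hsch : Tendsto (fun n => ∑' j, |a n j - b j|) atTop (𝓝 0) :=
    scheffe a b ha0 hb0 hasummable hatot hbsum hbtot hpt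
  -- conclude
  have hfb : ∀ x : ℝ, |f x| ≤ ‖f‖ := fun x => by
    have := f.norm_coe_le_norm x
    rwa [Real.norm_eq_abs] at this
  have hpois_int : ∫ x, f x ∂(poissonLaw lam) = ∑' j : ℕ, b j * f j := by
    haveI := isProbability_poissonLaw hlam.le
    exact integral_poissonLaw hlam.le f.continuous.measurable.aestronglyMeasurable hfb
  have hSint : ∀ n, ∫ ω, f (S n ω) ∂P = ∑' j : ℕ, f j * a n j := by
    intro n
    have h1 : ∫ ω, f (S n ω) ∂P = ∫ x, f x ∂(ν n) := by
      rw [hνdef]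
      simp only
      rw [integral_map (hSm n).aemeasurable f.continuous.aestronglyMeasurable]
    have h2 := hInt n f f.continuous.measurable ‖f‖ hfb
    have h3 : ∑' j : ℕ, f j * a n j = ∑ j ∈ Finset.range (kk n + 1), f j * a n j :=
      tsum_eq_sum fun j hj => by rw [haz n j (by simpa using hj), mul_zero]
    rw [h1, h2, h3]
  rw [tendsto_iff_dist_tendsto_zero]
  have hbound : ∀ n, dist (∫ ω, f (S n ω) ∂P) (∫ x, f x ∂(poissonLaw lam))
      ≤ ‖f‖ * ∑' j, |a n j - b j| := by
    intro n
    rw [hSint n, hpois_int, Real.dist_eq]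
    have hsa : Summable (fun j : ℕ => f j * a n j) :=
      summable_of_ne_finset_zero (s := Finset.range (kk n + 1)) fun j hj => by
        rw [haz n j (by simpa using hj), mul_zero]
    have hsb : Summable (fun j : ℕ => b j * f j) := by
      refine Summable.of_norm_bounded (g := fun j => ‖f‖ * b j) (hbsum.mul_left ‖f‖)
        fun j => ?_
      rw [Real.norm_eq_abs, abs_mul, abs_of_nonneg (hb0 j), mul_comm]
      exact mul_le_mul_of_nonneg_right (hfb j) (hb0 j)
    have hdiff_abs : Summable (fun j : ℕ => |a n j - b j|) :=
      ((hasummable n).sub hbsum).abs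
    have hsd : Summable (fun j : ℕ => f j * (a n j - b j)) := by
      refine Summable.of_norm_bounded (g := fun j => ‖f‖ * |a n j - b j|)
        (hdiff_abs.mul_left ‖f‖) fun j => ?_
      rw [Real.norm_eq_abs, abs_mul]
      exact mul_le_mul_of_nonneg_right (hfb j) (abs_nonneg _)
    have he : ∑' j : ℕ, f j * a n j - ∑' j : ℕ, b j * f j
        = ∑' j : ℕ, f j * (a n j - b j) := by
      rw [← Summable.tsum_sub hsa hsb]
      exact tsum_congr fun j => by ring
    rw [he]
    calc |∑' j : ℕ, f j * (a n j - b j)| ≤ ∑' j : ℕ, ‖f j * (a n j - b j)‖ := by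
          have := norm_tsum_le_tsum_norm (f := fun j : ℕ => f j * (a n j - b j))
            (by
              refine Summable.of_nonneg_of_le (fun j => norm_nonneg _) (fun j => ?_)
                (hdiff_abs.mul_left ‖f‖)
              rw [Real.norm_eq_abs, abs_mul]
              exact mul_le_mul_of_nonneg_right (hfb j) (abs_nonneg _))
          rwa [Real.norm_eq_abs] at this
      _ ≤ ∑' j : ℕ, ‖f‖ * |a n j - b j| := by
          refine Summable.tsum_le_tsum (fun j => ?_) ?_ (hdiff_abs.mul_left ‖f‖)
          · rw [Real.norm_eq_abs, abs_mul]
            exact mul_le_mul_of_nonneg_right (hfb j) (abs_nonneg _)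
          · refine Summable.of_nonneg_of_le (fun j => norm_nonneg _) (fun j => ?_)
              (hdiff_abs.mul_left ‖f‖)
            rw [Real.norm_eq_abs, abs_mul]
            exact mul_le_mul_of_nonneg_right (hfb j) (abs_nonneg _)
      _ = ‖f‖ * ∑' j, |a n j - b j| := tsum_mul_left
  refine squeeze_zero' (g := fun n => ‖f‖ * ∑' j, |a n j - b j|)
    (Filter.Eventually.of_forall fun n => dist_nonneg)
    (Filter.Eventually.of_forall hbound) ?_
  have := hsch.const_mul ‖f‖
  simpa using this
end
end

section
/- Suppose each row (X_{1,n},…,X_{k(n),n}) of the array is centered, square-integrable, stationary and associated, and that k(n)·Var(X_{1,n}) → λ₁ for some λ₁ > 0 and 2·Σ_{j=2}^{k(n)} (k(n)−j+1)·Cov(X_{1,n}, X_{j,n}) → λ₂ for some λ₂ ≥ 0. Then Var(Y_n^*) → 0 as n → ∞; that is, condition (C1) holds automatically. (Subsection 3.1) -/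
open MeasureTheory ProbabilityTheory Filter Finset Topology

noncomputable section

/-- **Subsection 3.1.** For a centered, square-integrable, stationary and associated array
with `k(n)·Var(X_{1,n}) → λ₁ > 0` and `2·∑_{j=2}^{k(n)} (k(n)-j+1)·Cov(X_{1,n},X_{j,n}) → λ₂ ≥ 0`,
the variance of the remainder `Y_n^* = ∑_{h < r(n)} X n (m(n)ℓ(n)+h)` tends to `0`
(condition (C1) holds automatically). Indices within rows are 0-based. -/
theorem stmt_8 {Ω : Type*} [MeasurableSpace Ω] (P : Measure Ω) [IsProbabilityMeasure P]
    (X : ℕ → ℕ → Ω → ℝ) (kk mm ll rr : ℕ → ℕ)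
    (hmeas : ∀ n k, Measurable (X n k))
    (hL2 : ∀ n, ∀ k < kk n, MemLp (X n k) 2 P)
    (hk : Tendsto kk atTop atTop)
    (hdecomp : ∀ n, kk n = mm n * ll n + rr n)
    (hm1 : ∀ n, 1 ≤ mm n) (hm : Tendsto mm atTop atTop)
    (hr : ∀ n, rr n < ll n)
    (hlm : Tendsto (fun n => (ll n : ℝ) / (mm n : ℝ)) atTop (𝓝 0))
    (lam1 lam2 : ℝ) (hlam1 : 0 < lam1) (hlam2 : 0 ≤ lam2)
    (hcent : ∀ n, ∀ k < kk n, ∫ ω, X n k ω ∂P = 0)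
    (hstat : ∀ n, RowStationary P (kk n) (X n))
    (hassoc : ∀ n, AssociatedRVs P (fun i : Fin (kk n) => X n (i : ℕ)))
    (hvar1 : Tendsto (fun n => (kk n : ℝ) * variance (X n 0) P) atTop (𝓝 lam1))
    (hvar2 : Tendsto
      (fun n => 2 * ∑ j ∈ Finset.Ico 1 (kk n), ((kk n : ℝ) - j) * rcov P (X n 0) (X n j))
      atTop (𝓝 lam2)) :
    Tendsto
      (fun n => variance (fun ω => ∑ h ∈ Finset.range (rr n), X n (mm n * ll n + h) ω) P)
      atTop (𝓝 0) := by
  -- every row has positive length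
  have hkpos : ∀ n, 0 < kk n := by
    intro n
    have h1 : 0 < ll n := lt_of_le_of_lt (Nat.zero_le _) (hr n)
    have h2 : 0 < mm n * ll n := Nat.mul_pos (hm1 n) h1
    have h3 := hdecomp n
    omega
  -- stationarity of second moments
  have hsq : ∀ n, ∀ t, t < kk n → ∫ ω, (X n t ω) ^ 2 ∂P = ∫ ω, (X n 0 ω) ^ 2 ∂P := by
    intro n t ht
    rcases Nat.eq_zero_or_pos t with h0 | h1
    · rw [h0]
    · have hmap := hstat n 1 t h1 (by omega)
      have hg : Measurable fun v : Fin 1 → ℝ => (v 0) ^ 2 :=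
        (measurable_pi_apply 0).pow_const 2
      have hf1 : Measurable fun ω (i : Fin 1) => X n (t + i) ω :=
        measurable_pi_lambda _ fun i => hmeas n _
      have hf2 : Measurable fun ω (i : Fin 1) => X n (i : ℕ) ω :=
        measurable_pi_lambda _ fun i => hmeas n _
      have e1 : ∫ v, (v 0) ^ 2 ∂(Measure.map (fun ω (i : Fin 1) => X n (t + i) ω) P)
          = ∫ ω, (X n t ω) ^ 2 ∂P := by
        rw [integral_map hf1.aemeasurable hg.aestronglyMeasurable]
        simp
      have e2 : ∫ v, (v 0) ^ 2 ∂(Measure.map (fun ω (i : Fin 1) => X n (i : ℕ) ω) P)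
          = ∫ ω, (X n 0 ω) ^ 2 ∂P := by
        rw [integral_map hf2.aemeasurable hg.aestronglyMeasurable]
        simp
      rw [← e1, ← e2, hmap]
  -- main bound:  Var(Y_n^*) ≤ (ℓ/m) · (k · Var(X₀))
  have key : ∀ n, variance (fun ω => ∑ h ∈ Finset.range (rr n), X n (mm n * ll n + h) ω) P
      ≤ ((ll n : ℝ) / (mm n : ℝ)) * ((kk n : ℝ) * variance (X n 0) P) := by
    intro n
    have hidx : ∀ h, h < rr n → mm n * ll n + h < kk n := by
      intro h hh
      have := hdecomp n
      omega
    have hX0 : MemLp (X n 0) 2 P := hL2 n 0 (hkpos n)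
    have hSmeas : Measurable fun ω => ∑ h ∈ Finset.range (rr n), X n (mm n * ll n + h) ω :=
      Finset.measurable_sum _ fun h _ => hmeas n _
    have hvar0 : variance (X n 0) P = ∫ ω, (X n 0 ω) ^ 2 ∂P := by
      rw [variance_eq_sub hX0, hcent n 0 (hkpos n)]
      simp
    have step1 : variance (fun ω => ∑ h ∈ Finset.range (rr n), X n (mm n * ll n + h) ω) P
        ≤ ∫ ω, (∑ h ∈ Finset.range (rr n), X n (mm n * ll n + h) ω) ^ 2 ∂P := by
      have := variance_le_expectation_sq (μ := P)
        (X := fun ω => ∑ h ∈ Finset.range (rr n), X n (mm n * ll n + h) ω)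
        hSmeas.aestronglyMeasurable
      simpa [Pi.pow_apply] using this
    have hintsum : Integrable
        (fun ω => (rr n : ℝ) * ∑ h ∈ Finset.range (rr n), (X n (mm n * ll n + h) ω) ^ 2) P := by
      exact (integrable_finset_sum _ fun h hh =>
        (hL2 n _ (hidx h (Finset.mem_range.mp hh))).integrable_sq).const_mul _
    have step2 : ∫ ω, (∑ h ∈ Finset.range (rr n), X n (mm n * ll n + h) ω) ^ 2 ∂P
        ≤ ∫ ω, (rr n : ℝ) * ∑ h ∈ Finset.range (rr n), (X n (mm n * ll n + h) ω) ^ 2 ∂P := by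
      refine integral_mono_of_nonneg (Eventually.of_forall fun ω => sq_nonneg _) hintsum
        (Eventually.of_forall fun ω => ?_)
      have := sq_sum_le_card_mul_sum_sq (s := Finset.range (rr n))
        (f := fun h => X n (mm n * ll n + h) ω)
      simpa using this
    have step3 : ∫ ω, (rr n : ℝ) * ∑ h ∈ Finset.range (rr n), (X n (mm n * ll n + h) ω) ^ 2 ∂P
        = (rr n : ℝ) ^ 2 * variance (X n 0) P := by
      rw [integral_const_mul, integral_finset_sum _ fun h hh =>
        (hL2 n _ (hidx h (Finset.mem_range.mp hh))).integrable_sq]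
      have : ∀ h ∈ Finset.range (rr n),
          ∫ ω, (X n (mm n * ll n + h) ω) ^ 2 ∂P = ∫ ω, (X n 0 ω) ^ 2 ∂P := fun h hh =>
        hsq n _ (hidx h (Finset.mem_range.mp hh))
      rw [Finset.sum_congr rfl this, Finset.sum_const, Finset.card_range, hvar0]
      push_cast
      ring
    have step4 : (rr n : ℝ) ^ 2 * variance (X n 0) P
        ≤ ((ll n : ℝ) / (mm n : ℝ)) * ((kk n : ℝ) * variance (X n 0) P) := by
      have hm0 : (0 : ℝ) < (mm n : ℝ) := by exact_mod_cast hm1 n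
      have hrl : (rr n : ℝ) ≤ (ll n : ℝ) := by exact_mod_cast (hr n).le
      have hr0 : (0 : ℝ) ≤ (rr n : ℝ) := Nat.cast_nonneg _
      have hml : (mm n : ℝ) * (ll n : ℝ) ≤ (kk n : ℝ) := by
        have : mm n * ll n ≤ kk n := by rw [hdecomp n]; omega
        exact_mod_cast this
      have hcoef : (rr n : ℝ) ^ 2 ≤ ((ll n : ℝ) / (mm n : ℝ)) * (kk n : ℝ) := by
        rw [div_mul_eq_mul_div, le_div_iff₀ hm0]
        have hl0 : (0 : ℝ) ≤ (ll n : ℝ) := Nat.cast_nonneg _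
        calc (rr n : ℝ) ^ 2 * (mm n : ℝ)
            ≤ (ll n : ℝ) ^ 2 * (mm n : ℝ) :=
              mul_le_mul_of_nonneg_right (pow_le_pow_left₀ hr0 hrl 2) hm0.le
          _ = (ll n : ℝ) * ((mm n : ℝ) * (ll n : ℝ)) := by ring
          _ ≤ (ll n : ℝ) * (kk n : ℝ) := mul_le_mul_of_nonneg_left hml hl0
      calc (rr n : ℝ) ^ 2 * variance (X n 0) P
          ≤ (((ll n : ℝ) / (mm n : ℝ)) * (kk n : ℝ)) * variance (X n 0) P :=
            mul_le_mul_of_nonneg_right hcoef (variance_nonneg _ _)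
        _ = ((ll n : ℝ) / (mm n : ℝ)) * ((kk n : ℝ) * variance (X n 0) P) := by ring
    exact le_trans step1 (le_trans step2 (le_of_eq step3 |>.trans step4))
  have hlim : Tendsto (fun n => ((ll n : ℝ) / (mm n : ℝ)) * ((kk n : ℝ) * variance (X n 0) P))
      atTop (𝓝 0) := by
    have := hlm.mul hvar1
    simpa using this
  exact squeeze_zero (fun n => variance_nonneg _ _) key hlim
end
end

section
/- Suppose each row (X_{1,n},…,X_{k(n),n}) of the array is centered and associated. If (i) there is a constant c > 0 with Var(S_n[X]) ≤ c for all n (condition BVH[X]), and (ii) for every ε > 0, ℓ(n) · sup_{1≤k≤k(n)} P(|X_{k,n}| ≥ ε/ℓ(n)) → 0 as n → ∞, then: Σ_{j=1}^{m(n)} Var(Y_{j,n}) ≤ c for all n (condition BVH[T], since Var(S_{m(n)}[T]) = Σ_j Var(Y_{j,n})), and for every ε > 0, sup_{1≤j≤m(n)} P(|Y_{j,n}| ≥ ε) → 0 as n → ∞ (condition UAN[T]). (Corollary 2.1, part (1)) -/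
open MeasureTheory ProbabilityTheory Filter Finset Topology
open scoped ENNReal NNReal

noncomputable section

lemma stmt17_int_mul {Ω : Type*} [MeasurableSpace Ω] {P : Measure Ω}
    {f g : Ω → ℝ} (hf : MemLp f 2 P) (hg : MemLp g 2 P) :
    Integrable (fun ω => f ω * g ω) P := by
  refine Integrable.mono' (hf.integrable_sq.add hg.integrable_sq)
    (hf.aestronglyMeasurable.mul hg.aestronglyMeasurable) (ae_of_all _ fun ω => ?_)
  simp only [Pi.add_apply]
  rw [Real.norm_eq_abs, abs_mul]
  nlinarith [sq_nonneg (|f ω| - |g ω|), sq_abs (f ω), sq_abs (g ω), abs_nonneg (f ω), abs_nonneg (g ω)]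

/-- truncation -/
def stmt17_trunc (M : ℕ) (t : ℝ) : ℝ := max (-(M : ℝ)) (min (M : ℝ) t)

lemma stmt17_trunc_mono (M : ℕ) : Monotone (stmt17_trunc M) := fun a b hab =>
  max_le_max le_rfl (min_le_min le_rfl hab)

lemma stmt17_trunc_abs_le_self (M : ℕ) (t : ℝ) : |stmt17_trunc M t| ≤ |t| := by
  have hM : (0:ℝ) ≤ (M:ℝ) := Nat.cast_nonneg M
  have ht := abs_nonneg t
  rw [abs_le, stmt17_trunc]
  constructor
  · rcases le_total 0 t with h | h
    · refine le_max_of_le_right (le_min ?_ ?_)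
      · linarith
      · rw [abs_of_nonneg h]; linarith
    · have : min (M:ℝ) t = t := _root_.min_eq_right (h.trans hM)
      rw [this, abs_of_nonpos h]
      simpa using _root_.le_max_right (-(M:ℝ)) t
  · exact max_le (by linarith) ((min_le_right _ _).trans (le_abs_self t))

lemma stmt17_trunc_abs_le (M : ℕ) (t : ℝ) : |stmt17_trunc M t| ≤ (M : ℝ) := by
  have hM : (0:ℝ) ≤ (M:ℝ) := Nat.cast_nonneg M
  rw [abs_le, stmt17_trunc]
  exact ⟨le_max_left _ _ |>.trans_eq' (by ring_nf), max_le (by linarith) (min_le_left _ _)⟩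

lemma stmt17_trunc_eq (M : ℕ) (t : ℝ) (h : |t| ≤ (M:ℝ)) : stmt17_trunc M t = t := by
  rw [abs_le] at h
  rw [stmt17_trunc, min_eq_right h.2, max_eq_right h.1]

lemma stmt17_trunc_tendsto (t : ℝ) :
    Tendsto (fun M => stmt17_trunc M t) atTop (𝓝 t) := by
  refine tendsto_const_nhds.congr' ?_
  filter_upwards [eventually_ge_atTop ⌈|t|⌉₊] with M hM
  exact (stmt17_trunc_eq M t ((Nat.le_ceil _).trans (by exact_mod_cast hM))).symm

lemma stmt17_rcov_nonneg {Ω : Type*} [MeasurableSpace Ω] (P : Measure Ω) [IsProbabilityMeasure P]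
    {m : ℕ} (X : Fin m → Ω → ℝ) (hmeas : ∀ i, Measurable (X i)) (hL2 : ∀ i, MemLp (X i) 2 P)
    (h : AssociatedRVs P X) (i j : Fin m) : 0 ≤ rcov P (X i) (X j) := by
  have htm : ∀ M : ℕ, Measurable (stmt17_trunc M) := fun M =>
    (continuous_const.max (continuous_const.min continuous_id)).measurable
  have key : ∀ M : ℕ, 0 ≤ rcov P (fun ω => stmt17_trunc M (X i ω)) (fun ω => stmt17_trunc M (X j ω)) := by
    intro M
    exact h (fun x => stmt17_trunc M (x i)) (fun x => stmt17_trunc M (x j))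
      ((htm M).comp (measurable_pi_apply i)) ((htm M).comp (measurable_pi_apply j))
      ⟨M, fun x => stmt17_trunc_abs_le M (x i)⟩ ⟨M, fun x => stmt17_trunc_abs_le M (x j)⟩
      (fun a b hab => stmt17_trunc_mono M (hab i)) (fun a b hab => stmt17_trunc_mono M (hab j))
  have hmul : Integrable (fun ω => |X i ω| * |X j ω|) P := by
    have := (stmt17_int_mul (hL2 i) (hL2 j)).abs
    simpa [abs_mul] using this
  have h1 : Tendsto (fun M : ℕ => ∫ ω, stmt17_trunc M (X i ω) * stmt17_trunc M (X j ω) ∂P)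
      atTop (𝓝 (∫ ω, X i ω * X j ω ∂P)) := by
    refine tendsto_integral_of_dominated_convergence (fun ω => |X i ω| * |X j ω|)
      (fun M => (((htm M).comp (hmeas i)).mul ((htm M).comp (hmeas j))).aestronglyMeasurable)
      hmul (fun M => ae_of_all _ fun ω => ?_) (ae_of_all _ fun ω =>
        (stmt17_trunc_tendsto (X i ω)).mul (stmt17_trunc_tendsto (X j ω)))
    rw [Real.norm_eq_abs, abs_mul]
    exact mul_le_mul (stmt17_trunc_abs_le_self M _) (stmt17_trunc_abs_le_self M _)
      (abs_nonneg _) (abs_nonneg _)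
  have h2 : ∀ k : Fin m, Tendsto (fun M : ℕ => ∫ ω, stmt17_trunc M (X k ω) ∂P)
      atTop (𝓝 (∫ ω, X k ω ∂P)) := by
    intro k
    refine tendsto_integral_of_dominated_convergence (fun ω => |X k ω|)
      (fun M => ((htm M).comp (hmeas k)).aestronglyMeasurable)
      ((hL2 k).integrable one_le_two).abs (fun M => ae_of_all _ fun ω => ?_)
      (ae_of_all _ fun ω => stmt17_trunc_tendsto (X k ω))
    rw [Real.norm_eq_abs]
    exact stmt17_trunc_abs_le_self M _
  have hlim := h1.sub ((h2 i).mul (h2 j))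
  exact ge_of_tendsto' hlim key

lemma stmt17_var_sum {Ω : Type*} [MeasurableSpace Ω] (P : Measure Ω) [IsProbabilityMeasure P]
    {ι : Type*} (s : Finset ι) (W : ι → Ω → ℝ) (hL2 : ∀ i ∈ s, MemLp (W i) 2 P) :
    variance (fun ω => ∑ i ∈ s, W i ω) P = ∑ i ∈ s, ∑ j ∈ s, rcov P (W i) (W j) := by
  have hS : MemLp (fun ω => ∑ i ∈ s, W i ω) 2 P := by
    have h := memLp_finset_sum' s hL2
    have : (∑ i ∈ s, W i) = fun ω => ∑ i ∈ s, W i ω := by ext ω; simp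
    rwa [this] at h
  rw [variance_eq_sub hS]
  have e1 : ∫ ω, ((fun ω => ∑ i ∈ s, W i ω) ^ 2) ω ∂P
      = ∑ i ∈ s, ∑ j ∈ s, ∫ ω, W i ω * W j ω ∂P := by
    simp only [Pi.pow_apply]
    rw [show (fun ω => (∑ i ∈ s, W i ω)^2) = fun ω => ∑ i ∈ s, ∑ j ∈ s, W i ω * W j ω by
      ext ω; rw [sq, Finset.sum_mul_sum]]
    rw [integral_finset_sum s (fun i hi => integrable_finset_sum s
      (fun j hj => stmt17_int_mul (hL2 i hi) (hL2 j hj)))]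
    exact Finset.sum_congr rfl fun i hi => integral_finset_sum s fun j hj =>
      stmt17_int_mul (hL2 i hi) (hL2 j hj)
  have e2 : ∫ ω, (∑ i ∈ s, W i ω) ∂P = ∑ i ∈ s, ∫ ω, W i ω ∂P :=
    integral_finset_sum s fun i hi => (hL2 i hi).integrable one_le_two
  rw [e1, e2, sq, Finset.sum_mul_sum]
  simp only [rcov, Finset.sum_sub_distrib]

/-- **Corollary 2.1, part (1).** For a centered, square-integrable, by-row associated array:
if `Var(S_n[X]) ≤ c` for all `n` (BVH[X]) and
`ℓ(n) · sup_{k<k(n)} P(|X_{k,n}| ≥ ε/ℓ(n)) → 0` for every `ε > 0`, then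
`∑_{j<m(n)} Var(Y_{j,n}) ≤ c` for all `n` (BVH[T], since
`Var(S_{m(n)}[T]) = ∑_j Var(Y_{j,n})`), and `sup_{j<m(n)} P(|Y_{j,n}| ≥ ε) → 0`
for every `ε > 0` (UAN[T]). Indices within rows are 0-based, and
`Y_{j,n} = ∑_{h<ℓ(n)} X n (j·ℓ(n)+h)`. -/
theorem stmt_17 {Ω : Type*} [MeasurableSpace Ω] (P : Measure Ω) [IsProbabilityMeasure P]
    (X : ℕ → ℕ → Ω → ℝ) (kk mm ll rr : ℕ → ℕ)
    (hmeas : ∀ n k, Measurable (X n k))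
    (hL2 : ∀ n, ∀ k < kk n, MemLp (X n k) 2 P)
    (hk : Tendsto kk atTop atTop)
    (hdecomp : ∀ n, kk n = mm n * ll n + rr n)
    (hm1 : ∀ n, 1 ≤ mm n) (hm : Tendsto mm atTop atTop)
    (hr : ∀ n, rr n < ll n)
    (hlm : Tendsto (fun n => (ll n : ℝ) / (mm n : ℝ)) atTop (𝓝 0))
    (c : ℝ) (hc : 0 < c)
    (hcent : ∀ n, ∀ k < kk n, ∫ ω, X n k ω ∂P = 0)
    (hassoc : ∀ n, AssociatedRVs P (fun i : Fin (kk n) => X n (i : ℕ)))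
    (hBVH : ∀ n, variance (fun ω => ∑ k ∈ Finset.range (kk n), X n k ω) P ≤ c)
    (hUANX : ∀ ε > (0 : ℝ), Tendsto
      (fun n => (ll n : ℝ≥0∞) *
        ⨆ k ∈ Finset.range (kk n), P {ω | ε / (ll n : ℝ) ≤ |X n k ω|})
      atTop (𝓝 0)) :
    (∀ n, ∑ j ∈ Finset.range (mm n),
        variance (fun ω => ∑ h ∈ Finset.range (ll n), X n (j * ll n + h) ω) P ≤ c) ∧
    ∀ ε > (0 : ℝ), Tendsto
      (fun n => ⨆ j ∈ Finset.range (mm n),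
        P {ω | ε ≤ abs (∑ h ∈ Finset.range (ll n), X n (j * ll n + h) ω)})
      atTop (𝓝 0) := by
  have hL1 : ∀ n, 0 < ll n := fun n => (Nat.zero_le _).trans_lt (hr n)
  have hMLK : ∀ n, mm n * ll n ≤ kk n := fun n => (hdecomp n).symm ▸ Nat.le_add_right _ _
  have hblockmem : ∀ n, ∀ j < mm n, ∀ h < ll n, j * ll n + h < kk n := by
    intro n j hj h hh
    calc j * ll n + h < j * ll n + ll n := by omega
      _ = (j + 1) * ll n := by ring
      _ ≤ mm n * ll n := Nat.mul_le_mul_right _ hj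
      _ ≤ kk n := hMLK n
  constructor
  · intro n
    have hXL2 : ∀ a ∈ Finset.range (kk n), MemLp (X n a) 2 P := fun a ha =>
      hL2 n a (Finset.mem_range.mp ha)
    have hnonneg : ∀ a ∈ Finset.range (kk n), ∀ b ∈ Finset.range (kk n),
        0 ≤ rcov P (X n a) (X n b) := by
      intro a ha b hb
      exact stmt17_rcov_nonneg P (fun i : Fin (kk n) => X n i) (fun i => hmeas n i)
        (fun i => hL2 n i i.isLt) (hassoc n)
        ⟨a, Finset.mem_range.mp ha⟩ ⟨b, Finset.mem_range.mp hb⟩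
    set s : ℕ → Finset ℕ := fun j => (Finset.range (ll n)).image (fun h => j * ll n + h)
      with hs
    have hdiv : ∀ j h, h < ll n → (j * ll n + h) / ll n = j := by
      intro j h hh
      rw [mul_comm, Nat.mul_add_div (hL1 n), Nat.div_eq_of_lt hh, Nat.add_zero]
    have hsubK : ∀ j ∈ Finset.range (mm n), s j ⊆ Finset.range (kk n) := by
      intro j hj a ha
      simp only [hs, Finset.mem_image, Finset.mem_range] at ha
      obtain ⟨h, hh, rfl⟩ := ha
      exact Finset.mem_range.mpr (hblockmem n j (Finset.mem_range.mp hj) h hh)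
    set U : Finset ℕ := (Finset.range (mm n)).biUnion s with hU
    have hUsub : U ⊆ Finset.range (kk n) := Finset.biUnion_subset.mpr hsubK
    have hdisj : (↑(Finset.range (mm n)) : Set ℕ).PairwiseDisjoint s := by
      intro j1 _ j2 _ hne
      refine Finset.disjoint_left.mpr fun a ha1 ha2 => hne ?_
      simp only [hs, Finset.mem_image, Finset.mem_range] at ha1 ha2
      obtain ⟨h1, hh1, rfl⟩ := ha1
      obtain ⟨h2, hh2, heq⟩ := ha2
      rw [← hdiv j1 h1 hh1, ← heq, hdiv j2 h2 hh2]
    have hvarY : ∀ j ∈ Finset.range (mm n),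
        variance (fun ω => ∑ h ∈ Finset.range (ll n), X n (j * ll n + h) ω) P
        = ∑ a ∈ s j, ∑ b ∈ s j, rcov P (X n a) (X n b) := by
      intro j hj
      have hrw : (fun ω => ∑ h ∈ Finset.range (ll n), X n (j * ll n + h) ω)
          = fun ω => ∑ a ∈ s j, X n a ω := by
        funext ω
        exact (Finset.sum_image (g := fun h => j * ll n + h) (s := Finset.range (ll n))
          (f := fun a => X n a ω)
          (fun a _ b _ hab => Nat.add_left_cancel hab)).symm
      rw [hrw]
      exact stmt17_var_sum P (s j) (X n) fun a ha => hXL2 a (hsubK j hj ha)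
    calc ∑ j ∈ Finset.range (mm n),
        variance (fun ω => ∑ h ∈ Finset.range (ll n), X n (j * ll n + h) ω) P
        = ∑ j ∈ Finset.range (mm n), ∑ a ∈ s j, ∑ b ∈ s j, rcov P (X n a) (X n b) :=
          Finset.sum_congr rfl hvarY
      _ ≤ ∑ j ∈ Finset.range (mm n), ∑ a ∈ s j, ∑ b ∈ U, rcov P (X n a) (X n b) := by
          refine Finset.sum_le_sum fun j hj => Finset.sum_le_sum fun a ha => ?_
          refine Finset.sum_le_sum_of_subset_of_nonneg
            (Finset.subset_biUnion_of_mem s hj) fun b hb _ => ?_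
          exact hnonneg a (hsubK j hj ha) b (hUsub hb)
      _ = ∑ a ∈ U, ∑ b ∈ U, rcov P (X n a) (X n b) :=
          (Finset.sum_biUnion hdisj).symm
      _ ≤ ∑ a ∈ U, ∑ b ∈ Finset.range (kk n), rcov P (X n a) (X n b) := by
          refine Finset.sum_le_sum fun a ha => ?_
          exact Finset.sum_le_sum_of_subset_of_nonneg hUsub fun b hb _ =>
            hnonneg a (hUsub ha) b hb
      _ ≤ ∑ a ∈ Finset.range (kk n), ∑ b ∈ Finset.range (kk n), rcov P (X n a) (X n b) := by
          refine Finset.sum_le_sum_of_subset_of_nonneg hUsub fun a ha _ => ?_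
          exact Finset.sum_nonneg fun b hb => hnonneg a ha b hb
      _ = variance (fun ω => ∑ k ∈ Finset.range (kk n), X n k ω) P :=
          (stmt17_var_sum P (Finset.range (kk n)) (X n) hXL2).symm
      _ ≤ c := hBVH n
  · intro ε hε
    refine tendsto_of_tendsto_of_tendsto_of_le_of_le tendsto_const_nhds (hUANX ε hε)
      (fun n => zero_le) (fun n => ?_)
    refine iSup₂_le fun j hj => ?_
    have hL1n : 0 < ll n := hL1 n
    have hincl : {ω | ε ≤ |∑ h ∈ Finset.range (ll n), X n (j * ll n + h) ω|}
        ⊆ ⋃ h ∈ Finset.range (ll n), {ω | ε / (ll n : ℝ) ≤ |X n (j * ll n + h) ω|} := by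
      intro ω hω
      by_contra hc
      simp only [Set.mem_iUnion, Set.mem_setOf_eq, not_exists, not_le,
        Finset.mem_range] at hc
      have hlt : |∑ h ∈ Finset.range (ll n), X n (j * ll n + h) ω| < ε := by
        calc |∑ h ∈ Finset.range (ll n), X n (j * ll n + h) ω|
            ≤ ∑ h ∈ Finset.range (ll n), |X n (j * ll n + h) ω| :=
              Finset.abs_sum_le_sum_abs _ _
          _ < ∑ _h ∈ Finset.range (ll n), ε / (ll n : ℝ) :=
              Finset.sum_lt_sum_of_nonempty ⟨0, Finset.mem_range.mpr hL1n⟩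
                (fun h hh => hc h (Finset.mem_range.mp hh))
          _ = ε := by
              rw [Finset.sum_const, Finset.card_range, nsmul_eq_mul]
              field_simp
      exact absurd hω (not_le.mpr hlt)
    calc P {ω | ε ≤ |∑ h ∈ Finset.range (ll n), X n (j * ll n + h) ω|}
        ≤ P (⋃ h ∈ Finset.range (ll n), {ω | ε / (ll n : ℝ) ≤ |X n (j * ll n + h) ω|}) :=
          measure_mono hincl
      _ ≤ ∑ h ∈ Finset.range (ll n), P {ω | ε / (ll n : ℝ) ≤ |X n (j * ll n + h) ω|} :=
          measure_biUnion_finset_le _ _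
      _ ≤ ∑ _h ∈ Finset.range (ll n),
            ⨆ k ∈ Finset.range (kk n), P {ω | ε / (ll n : ℝ) ≤ |X n k ω|} := by
          refine Finset.sum_le_sum fun h hh => ?_
          exact le_iSup₂ (f := fun k (_ : k ∈ Finset.range (kk n)) =>
              P {ω | ε / (ll n : ℝ) ≤ |X n k ω|}) (j * ll n + h)
            (Finset.mem_range.mpr
              (hblockmem n j (Finset.mem_range.mp hj) h (Finset.mem_range.mp hh)))
      _ = (ll n : ℝ≥0∞) * ⨆ k ∈ Finset.range (kk n), P {ω | ε / (ll n : ℝ) ≤ |X n k ω|} := by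
          rw [Finset.sum_const, Finset.card_range, nsmul_eq_mul]
end
end

section
/- Let k(n) → ∞ and for each n let q_{1,n}, …, q_{k(n),n} ∈ [0,1). Write q̄_n = sup_{1≤k≤k(n)} q_{k,n}. Assume q̄_n → 0, Σ_{k=1}^{k(n)} q_{k,n} → λ for some λ > 0, and k(n)·q̄_n² → 0. Then for every u ∈ ℝ, ∏_{k=1}^{k(n)} (1 − q_{k,n})/(1 − q_{k,n} e^{iu}) → exp(λ(e^{iu} − 1)) as n → ∞. (Convergence of the product of corrected-geometric characteristic functions to the Poisson characteristic function, proof of Theorem 4.4) -/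
open MeasureTheory ProbabilityTheory Filter Finset Topology
open scoped ENNReal NNReal

noncomputable section

lemma aux_log_est {w : ℂ} (hw : ‖w‖ ≤ 1/2) : ‖Complex.log (1 - w) + w‖ ≤ ‖w‖ ^ 2 := by
  have h1 : ‖-w‖ < 1 := by rw [norm_neg]; linarith
  have h := Complex.norm_log_one_add_sub_self_le h1
  rw [norm_neg] at h
  have e1 : (1 : ℂ) + -w = 1 - w := by ring
  have e2 : Complex.log (1 + -w) - -w = Complex.log (1 - w) + w := by rw [e1]; ring
  rw [e2] at h
  refine h.trans ?_
  have hpos : (0:ℝ) < 1 - ‖w‖ := by linarith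
  have hinv : (1 - ‖w‖)⁻¹ ≤ 2 := by
    have h0 : (2:ℝ)⁻¹ ≤ 1 - ‖w‖ := by rw [← one_div]; linarith
    calc (1 - ‖w‖)⁻¹ ≤ ((2:ℝ)⁻¹)⁻¹ := inv_anti₀ (by norm_num) h0
      _ = 2 := by norm_num
  have := mul_le_mul_of_nonneg_left hinv (sq_nonneg ‖w‖)
  rw [div_eq_mul_inv]
  linarith

lemma term_est {q : ℝ} (hq0 : 0 ≤ q) (hq : q ≤ 1/2) {z : ℂ} (hz : ‖z‖ = 1) :
    ‖(Complex.log (1 - (q:ℂ)) - Complex.log (1 - (q:ℂ) * z)) - (q:ℂ) * (z - 1)‖ ≤ 2 * q ^ 2 := by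
  have hnq : ‖(q:ℂ)‖ = q := by simp [abs_of_nonneg hq0]
  have hnqz : ‖(q:ℂ) * z‖ = q := by rw [norm_mul, hnq, hz, mul_one]
  have h1 : ‖Complex.log (1 - (q:ℂ)) + q‖ ≤ q ^ 2 := by
    have := aux_log_est (w := (q:ℂ)) (by rw [hnq]; exact hq)
    rwa [hnq] at this
  have h2 : ‖Complex.log (1 - (q:ℂ) * z) + (q:ℂ) * z‖ ≤ q ^ 2 := by
    have := aux_log_est (w := (q:ℂ) * z) (by rw [hnqz]; exact hq)
    rwa [hnqz] at this
  have e : (Complex.log (1 - (q:ℂ)) - Complex.log (1 - (q:ℂ) * z)) - (q:ℂ) * (z - 1)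
      = (Complex.log (1 - (q:ℂ)) + q) - (Complex.log (1 - (q:ℂ) * z) + (q:ℂ) * z) := by ring
  rw [e]
  calc ‖_ - _‖ ≤ ‖Complex.log (1 - (q:ℂ)) + (q:ℂ)‖ + ‖Complex.log (1 - (q:ℂ) * z) + (q:ℂ) * z‖ :=
        norm_sub_le _ _
    _ ≤ q ^ 2 + q ^ 2 := add_le_add h1 h2
    _ = 2 * q ^ 2 := by ring

/-- **Proof of Theorem 4.4 (corrected-geometric products).** If
`q̄_n = sup_{k<k(n)} q_{k,n} → 0`, `∑_{k<k(n)} q_{k,n} → λ > 0` and `k(n)·q̄_n² → 0`,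
then for every `u ∈ ℝ`,
`∏_{k<k(n)} (1 − q_{k,n})/(1 − q_{k,n} e^{iu}) → exp(λ(e^{iu} − 1))`. -/
theorem stmt_19 (kk : ℕ → ℕ) (hk : Tendsto kk atTop atTop)
    (q : ℕ → ℕ → ℝ) (lam : ℝ) (hlam : 0 < lam)
    (hq01 : ∀ n, ∀ k < kk n, 0 ≤ q n k ∧ q n k < 1)
    (hbar : Tendsto (fun n => ⨆ k ∈ Finset.range (kk n), q n k) atTop (𝓝 0))
    (hsum : Tendsto (fun n => ∑ k ∈ Finset.range (kk n), q n k) atTop (𝓝 lam))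
    (hsq : Tendsto (fun n => (kk n : ℝ) * (⨆ k ∈ Finset.range (kk n), q n k) ^ 2)
      atTop (𝓝 0)) :
    ∀ u : ℝ, Tendsto
      (fun n => ∏ k ∈ Finset.range (kk n),
        ((1 - (q n k : ℂ)) / (1 - (q n k : ℂ) * Complex.exp ((u : ℂ) * Complex.I))))
      atTop (𝓝 (Complex.exp ((lam : ℂ) * (Complex.exp ((u : ℂ) * Complex.I) - 1)))) := by
  intro u
  set z : ℂ := Complex.exp ((u : ℂ) * Complex.I) with hzdef
  have hznorm : ‖z‖ = 1 := by
    rw [hzdef]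
    exact Complex.norm_exp_ofReal_mul_I u
  set Q : ℕ → ℝ := fun n => ⨆ k ∈ Finset.range (kk n), q n k with hQdef
  -- boundedness of the sup family
  have hbdd : ∀ n, BddAbove (Set.range fun k => ⨆ _ : k ∈ Finset.range (kk n), q n k) := by
    intro n
    apply Set.Finite.bddAbove
    apply Set.Finite.subset
      (((Finset.range (kk n)).image (q n)).finite_toSet.insert (0:ℝ))
    rintro x ⟨k, rfl⟩
    by_cases hk : k ∈ Finset.range (kk n)
    · rw [show (fun k => ⨆ _ : k ∈ Finset.range (kk n), q n k) k
          = ⨆ _ : k ∈ Finset.range (kk n), q n k from rfl, ciSup_pos hk]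
      exact Set.mem_insert_iff.mpr (Or.inr (Finset.mem_image.mpr ⟨k, hk, rfl⟩))
    · have he : IsEmpty (k ∈ Finset.range (kk n)) := ⟨hk⟩
      rw [show (fun k => ⨆ _ : k ∈ Finset.range (kk n), q n k) k
          = ⨆ _ : k ∈ Finset.range (kk n), q n k from rfl, Real.iSup_of_isEmpty]
      exact Set.mem_insert _ _
  have hleQ : ∀ n, ∀ k ∈ Finset.range (kk n), q n k ≤ Q n := by
    intro n k hk
    have := le_ciSup (hbdd n) k
    rwa [ciSup_pos hk] at this
  -- the partial log-sums
  set S : ℕ → ℂ := fun n => ∑ k ∈ Finset.range (kk n),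
    (Complex.log (1 - (q n k : ℂ)) - Complex.log (1 - (q n k : ℂ) * z)) with hSdef
  -- eventually Q n < 1/2
  have hQsmall : ∀ᶠ n in atTop, Q n < 1/2 := hbar.eventually (eventually_lt_nhds (by norm_num))
  -- eventually the product equals exp (S n)
  have hprod : ∀ᶠ n in atTop,
      (∏ k ∈ Finset.range (kk n),
        ((1 - (q n k : ℂ)) / (1 - (q n k : ℂ) * Complex.exp ((u : ℂ) * Complex.I))))
      = Complex.exp (S n) := by
    filter_upwards [hQsmall] with n hQn
    rw [hSdef, Complex.exp_sum]
    apply Finset.prod_congr rfl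
    intro k hk
    have hq := hq01 n k (Finset.mem_range.mp hk)
    have hqle : q n k ≤ 1/2 := (hleQ n k hk).trans hQn.le
    have h1 : (1 : ℂ) - (q n k : ℂ) ≠ 0 := by
      have : ((1 - q n k : ℝ) : ℂ) ≠ 0 := by
        exact_mod_cast (sub_pos.mpr hq.2).ne'
      simpa using this
    have h2 : (1 : ℂ) - (q n k : ℂ) * z ≠ 0 := by
      intro h
      have : ‖(q n k : ℂ) * z‖ = 1 := by
        have : (q n k : ℂ) * z = 1 := by linear_combination -h
        rw [this, norm_one]
      rw [norm_mul, hznorm, mul_one, Complex.norm_real, Real.norm_eq_abs,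
        abs_of_nonneg hq.1] at this
      linarith
    rw [Complex.exp_sub, Complex.exp_log h1, Complex.exp_log h2, hzdef]
  -- the error term
  have herr : ∀ᶠ n in atTop,
      ‖S n - ((∑ k ∈ Finset.range (kk n), q n k : ℝ) : ℂ) * (z - 1)‖
        ≤ 2 * ((kk n : ℝ) * Q n ^ 2) := by
    filter_upwards [hQsmall] with n hQn
    have e : S n - ((∑ k ∈ Finset.range (kk n), q n k : ℝ) : ℂ) * (z - 1)
        = ∑ k ∈ Finset.range (kk n),
          ((Complex.log (1 - (q n k : ℂ)) - Complex.log (1 - (q n k : ℂ) * z))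
            - (q n k : ℂ) * (z - 1)) := by
      rw [hSdef, Finset.sum_sub_distrib, Complex.ofReal_sum, Finset.sum_mul]
    rw [e]
    calc ‖∑ k ∈ Finset.range (kk n), _‖
        ≤ ∑ k ∈ Finset.range (kk n),
          ‖(Complex.log (1 - (q n k : ℂ)) - Complex.log (1 - (q n k : ℂ) * z))
            - (q n k : ℂ) * (z - 1)‖ := norm_sum_le _ _
      _ ≤ ∑ k ∈ Finset.range (kk n), 2 * Q n ^ 2 := by
          apply Finset.sum_le_sum
          intro k hk
          have hq := hq01 n k (Finset.mem_range.mp hk)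
          have hqle : q n k ≤ 1/2 := (hleQ n k hk).trans hQn.le
          refine (term_est hq.1 hqle hznorm).trans ?_
          have : q n k ^ 2 ≤ Q n ^ 2 := pow_le_pow_left₀ hq.1 (hleQ n k hk) 2
          linarith
      _ = 2 * ((kk n : ℝ) * Q n ^ 2) := by
          rw [Finset.sum_const, Finset.card_range]; push_cast; ring
  -- S tends to lam * (z - 1)
  have hS : Tendsto S atTop (𝓝 ((lam : ℂ) * (z - 1))) := by
    have hR : Tendsto (fun n => S n
        - ((∑ k ∈ Finset.range (kk n), q n k : ℝ) : ℂ) * (z - 1)) atTop (𝓝 0) := by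
      apply squeeze_zero_norm' herr
      have h2 := hsq.const_mul (2 : ℝ)
      rw [mul_zero] at h2
      exact h2
    have hmain : Tendsto (fun n => ((∑ k ∈ Finset.range (kk n), q n k : ℝ) : ℂ) * (z - 1))
        atTop (𝓝 ((lam : ℂ) * (z - 1))) := by
      exact (((Complex.continuous_ofReal.tendsto lam).comp hsum).mul_const (z - 1))
    have := hR.add hmain
    simpa using this
  have hfinal : Tendsto (fun n => Complex.exp (S n)) atTop
      (𝓝 (Complex.exp ((lam : ℂ) * (z - 1)))) :=
    (Complex.continuous_exp.tendsto _).comp hS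
  exact Tendsto.congr' (hprod.mono fun n h => h.symm) hfinal
end
end
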